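/- arXiv:math/0408011 — 2 statements merged into one kernel-verified Lean document; each statement's English description precedes it below -/
import Mathlib

section
/- Let n ≥ 1 and let W be a connected component of the set of all parameters κ ∈ ℂ for which E_κ has an attracting periodic point. Assume that every κ ∈ W has an attracting periodic point z with E_κ^n(z) = z. Then for every κ₀ in the boundary of W (taken in ℂ) there exists z₀ ∈ ℂ with E_{κ₀}^n(z₀) = z₀ and |(E_{κ₀}^n)′(z₀)| = 1; that is, every finite boundary point of W is an indifferent parameter of period dividing n. -/
open Complex Metric Filter Topology Finset

noncomputable def Ef (κ : ℂ) : ℂ → ℂ := fun w => Complex.exp w + κ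

lemma Ef_diff (κ : ℂ) : Differentiable ℂ (Ef κ) :=
  Complex.differentiable_exp.add_const κ

lemma deriv_Ef (κ : ℂ) (w : ℂ) : deriv (Ef κ) w = Complex.exp w := by
  unfold Ef
  rw [deriv_add_const]
  rw [Complex.deriv_exp]

lemma deriv_Ef_iter (κ : ℂ) (m : ℕ) (z : ℂ) :
    deriv ((Ef κ)^[m]) z = Complex.exp (∑ i ∈ Finset.range m, (Ef κ)^[i] z) := by
  induction m with
  | zero => simp
  | succ m ih =>
    rw [Function.iterate_succ',
      deriv_comp (hh₂ := (Ef_diff κ).differentiableAt) (hh := ((Ef_diff κ).iterate m).differentiableAt),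
      deriv_Ef, ih, Finset.sum_range_succ, Complex.exp_add, mul_comm]

lemma contIter (m : ℕ) : Continuous (fun p : ℂ × ℂ => (Ef p.1)^[m] p.2) := by
  induction m with
  | zero => simpa using continuous_snd
  | succ m ih =>
    have h : (fun p : ℂ × ℂ => (Ef p.1)^[m+1] p.2)
        = fun p : ℂ × ℂ => Complex.exp ((Ef p.1)^[m] p.2) + p.1 := by
      funext p; rw [Function.iterate_succ_apply']; rfl
    rw [h]
    exact (Complex.continuous_exp.comp ih).add continuous_fst

noncomputable def mult (n : ℕ) (p : ℂ × ℂ) : ℂ :=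
  Complex.exp (∑ i ∈ Finset.range n, (Ef p.1)^[i] p.2)

lemma contMult (n : ℕ) : Continuous (mult n) := by
  unfold mult
  exact Complex.continuous_exp.comp (continuous_finset_sum _ fun i _ => contIter i)

noncomputable def gfun (C : ℝ) : ℝ → ℝ := fun t => Real.exp t + C

lemma gfun_mono (C : ℝ) : Monotone (gfun C) :=
  fun a b h => by have := Real.exp_le_exp.2 h; simp only [gfun]; linarith

lemma le_gfun (C : ℝ) (hC : 0 ≤ C) (t : ℝ) : t ≤ gfun C t := by
  unfold gfun
  nlinarith [Real.add_one_le_exp t]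

lemma le_gfun_iter (C : ℝ) (hC : 0 ≤ C) (t : ℝ) (k : ℕ) : t ≤ (gfun C)^[k] t := by
  induction k with
  | zero => simp
  | succ k ih =>
    rw [Function.iterate_succ_apply']
    exact ih.trans (le_gfun C hC _)

lemma abs_Ef_iter_le (C : ℝ) (hC : 0 ≤ C) (κ : ℂ) (hκ : ‖κ‖ ≤ C)
    (w : ℂ) (k : ℕ) : ‖(Ef κ)^[k] w‖ ≤ (gfun C)^[k] (‖w‖) := by
  induction k generalizing w with
  | zero => simp
  | succ k ih =>
    rw [Function.iterate_succ_apply, Function.iterate_succ_apply]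
    refine le_trans (ih _) ((gfun_mono C).iterate k ?_)
    calc ‖Ef κ w‖ ≤ ‖Complex.exp w‖ + ‖κ‖ :=
          norm_add_le _ _
      _ ≤ Real.exp (‖w‖) + C := by
          rw [Complex.norm_exp]
          exact add_le_add (Real.exp_le_exp.2 (Complex.re_le_norm w)) hκ
      _ = gfun C (‖w‖) := rfl

lemma orbit_bound (n : ℕ) (hn : 1 ≤ n) (C : ℝ) (hC : 0 ≤ C) (κ z : ℂ)
    (hκ : ‖κ‖ ≤ C) (hz : (Ef κ)^[n] z = z)
    (hm : ‖mult n (κ, z)‖ < 1) :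
    ‖z‖ ≤ (gfun C)^[n] (1 + C) := by
  -- some orbit point has negative real part
  have hre : (∑ i ∈ Finset.range n, (Ef κ)^[i] z).re < 0 := by
    have := hm
    rw [mult, Complex.norm_exp, Real.exp_lt_one_iff] at this
    exact this
  have hex : ∃ i ∈ Finset.range n, ((Ef κ)^[i] z).re < 0 := by
    by_contra hcon
    push_neg at hcon
    have : 0 ≤ (∑ i ∈ Finset.range n, (Ef κ)^[i] z).re := by
      rw [Complex.re_sum]
      exact Finset.sum_nonneg hcon
    linarith
  obtain ⟨i, hi, hineg⟩ := hex
  rw [Finset.mem_range] at hi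
  -- the next orbit point is small
  have hstep : ‖(Ef κ)^[i+1] z‖ ≤ 1 + C := by
    rw [Function.iterate_succ_apply']
    calc ‖Ef κ ((Ef κ)^[i] z)‖
        ≤ ‖Complex.exp ((Ef κ)^[i] z)‖ + ‖κ‖ := norm_add_le _ _
      _ ≤ 1 + C := by
          rw [Complex.norm_exp]
          exact add_le_add (le_of_lt (Real.exp_lt_one_iff.2 hineg)) hκ
  -- write z as an iterate of that point
  have hiter : (Ef κ)^[n - (i+1)] ((Ef κ)^[i+1] z) = z := by
    rw [← Function.iterate_add_apply, Nat.sub_add_cancel hi, hz]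
  calc ‖z‖ = ‖(Ef κ)^[n - (i+1)] ((Ef κ)^[i+1] z)‖ := by rw [hiter]
    _ ≤ (gfun C)^[n - (i+1)] (‖(Ef κ)^[i+1] z‖) := abs_Ef_iter_le C hC κ hκ _ _
    _ ≤ (gfun C)^[n - (i+1)] (1 + C) := ((gfun_mono C).iterate _) hstep
    _ ≤ (gfun C)^[n] (1 + C) := by
        conv_rhs => rw [show n = (i+1) + (n - (i+1)) by omega]
        rw [Function.iterate_add_apply]
        exact le_gfun_iter C hC _ _

lemma exists_fixed_of_contraction (z₀ : ℂ) (r : ℝ) (hr : 0 < r) (g : ℂ → ℂ)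
    (hg : Continuous g)
    (hmap : Set.MapsTo g (closedBall z₀ r) (closedBall z₀ r))
    (c : ℝ) (hc : c < 1)
    (hlip : ∀ x ∈ closedBall z₀ r, ∀ y ∈ closedBall z₀ r,
      dist (g x) (g y) ≤ c * dist x y) :
    ∃ z ∈ closedBall z₀ r, g z = z := by
  obtain ⟨z, hz, hmin⟩ := (isCompact_closedBall z₀ r).exists_isMinOn
    ⟨z₀, mem_closedBall_self hr.le⟩
    (Continuous.continuousOn (by continuity : Continuous fun z => dist (g z) z))
  refine ⟨z, hz, ?_⟩
  by_contra hne
  have hd : 0 < dist (g z) z := dist_pos.2 hne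
  have h1 : dist (g (g z)) (g z) ≤ c * dist (g z) z := hlip _ (hmap hz) _ hz
  have h2 : dist (g z) z ≤ dist (g (g z)) (g z) := hmin (hmap hz)
  nlinarith

lemma attracting_stable (n : ℕ) (κ₀ z₀ : ℂ)
    (hfix : (Ef κ₀)^[n] z₀ = z₀) (hm : ‖mult n (κ₀, z₀)‖ < 1) :
    ∃ δ > 0, ∀ κ : ℂ, dist κ κ₀ < δ →
      ∃ z : ℂ, (Ef κ)^[n] z = z ∧ ‖mult n (κ, z)‖ < 1 := by
  set c : ℝ := (1 + ‖mult n (κ₀, z₀)‖) / 2 with hc_def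
  have hc1 : c < 1 := by simp only [hc_def]; linarith
  have hc0 : 0 ≤ c := by positivity
  -- open set where |mult| < c
  have hU : IsOpen {p : ℂ × ℂ | ‖mult n p‖ < c} :=
    isOpen_lt (continuous_norm.comp (contMult n)) continuous_const
  have hmem : (κ₀, z₀) ∈ {p : ℂ × ℂ | ‖mult n p‖ < c} := by
    simp only [Set.mem_setOf_eq, hc_def]; linarith
  obtain ⟨ε, hε, hball⟩ := Metric.isOpen_iff.1 hU _ hmem
  set r : ℝ := ε / 2 with hr_def
  have hr : 0 < r := by positivity
  have hsmall : ∀ κ z : ℂ, dist κ κ₀ ≤ r → dist z z₀ ≤ r →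
      ‖mult n (κ, z)‖ < c := by
    intro κ z h1 h2
    apply hball
    rw [mem_ball, Prod.dist_eq]
    simp only [max_lt_iff]
    constructor <;> [skip; skip] <;>
      first
        | exact lt_of_le_of_lt h1 (by simp only [hr_def]; linarith)
        | exact lt_of_le_of_lt h2 (by simp only [hr_def]; linarith)
  -- continuity in κ at κ₀ of the base point image
  have hcont : Continuous fun κ : ℂ => (Ef κ)^[n] z₀ :=
    (contIter n).comp (continuous_id.prodMk continuous_const)
  have htend : Tendsto (fun κ : ℂ => (Ef κ)^[n] z₀) (𝓝 κ₀) (𝓝 z₀) := by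
    have := hcont.tendsto κ₀
    rwa [hfix] at this
  have hev : ∀ᶠ κ in 𝓝 κ₀, dist ((Ef κ)^[n] z₀) z₀ ≤ (1 - c) * r := by
    have hpos : 0 < (1 - c) * r := by nlinarith
    filter_upwards [htend (Metric.closedBall_mem_nhds z₀ hpos)] with κ hκ
    exact hκ
  obtain ⟨δ₁, hδ₁, hδball⟩ := Metric.eventually_nhds_iff_ball.1 hev
  refine ⟨min δ₁ r, lt_min hδ₁ hr, ?_⟩
  intro κ hκ
  have hκr : dist κ κ₀ ≤ r := le_of_lt (lt_of_lt_of_le hκ (min_le_right _ _))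
  have hκδ : κ ∈ ball κ₀ δ₁ := lt_of_lt_of_le hκ (min_le_left _ _)
  set g : ℂ → ℂ := fun z => (Ef κ)^[n] z with hg_def
  have hgcont : Continuous g := (contIter n).comp (continuous_const.prodMk continuous_id)
  have hgdiff : ∀ z, DifferentiableAt ℂ g z := fun z => (((Ef_diff κ).iterate n) z)
  have hgderiv : ∀ z ∈ closedBall z₀ r, ‖deriv g z‖ ≤ c := by
    intro z hz
    rw [hg_def]
    rw [deriv_Ef_iter κ n z]
    exact le_of_lt (hsmall κ z hκr (by rwa [mem_closedBall] at hz))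
  have hlip : ∀ x ∈ closedBall z₀ r, ∀ y ∈ closedBall z₀ r,
      dist (g x) (g y) ≤ c * dist x y := by
    intro x hx y hy
    rw [dist_eq_norm, dist_eq_norm]
    exact (convex_closedBall z₀ r).norm_image_sub_le_of_norm_deriv_le
      (fun w _ => hgdiff w) hgderiv hy hx
  have hmap : Set.MapsTo g (closedBall z₀ r) (closedBall z₀ r) := by
    intro z hz
    rw [mem_closedBall]
    calc dist (g z) z₀ ≤ dist (g z) (g z₀) + dist (g z₀) z₀ := dist_triangle _ _ _
      _ ≤ c * dist z z₀ + (1 - c) * r := by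
          refine add_le_add (hlip z hz z₀ (mem_closedBall_self hr.le)) ?_
          exact hδball κ hκδ
      _ ≤ c * r + (1 - c) * r := by
          have := (mem_closedBall.1 hz)
          nlinarith
      _ = r := by ring
  obtain ⟨z, hz, hgz⟩ := exists_fixed_of_contraction z₀ r hr g hgcont hmap c hc1 hlip
  refine ⟨z, hgz, ?_⟩
  exact lt_of_lt_of_le (hsmall κ z hκr (mem_closedBall.1 hz)) (le_of_lt hc1)

lemma Ef_eq (κ : ℂ) : (fun w => Complex.exp w + κ) = Ef κ := rfl

/-- Let `n ≥ 1` and let `W` be a connected component of the set of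
parameters `κ ∈ ℂ` for which `E_κ(z) = exp(z) + κ` has an attracting periodic point.
If every `κ ∈ W` has an attracting periodic point `z` with `E_κ^n(z) = z`, then every
`κ₀` in the boundary of `W` (taken in `ℂ`) has a periodic point `z₀` with
`E_{κ₀}^n(z₀) = z₀` whose multiplier has modulus `1`; i.e. every finite boundary point of
`W` is an indifferent parameter of period dividing `n`. -/
theorem stmt15 (n : ℕ) (hn : 1 ≤ n)
    (H : Set ℂ)
    (hH : H = {κ : ℂ | ∃ m : ℕ, 1 ≤ m ∧ ∃ z : ℂ,
      (fun w => Complex.exp w + κ)^[m] z = z ∧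
      ‖deriv ((fun w => Complex.exp w + κ)^[m]) z‖ < 1})
    (W : Set ℂ) (hW : ∃ κ ∈ H, W = connectedComponentIn H κ)
    (hattr : ∀ κ ∈ W, ∃ z : ℂ, (fun w => Complex.exp w + κ)^[n] z = z ∧
      ‖deriv ((fun w => Complex.exp w + κ)^[n]) z‖ < 1)
    (κ₀ : ℂ) (hκ₀ : κ₀ ∈ frontier W) :
    ∃ z₀ : ℂ, (fun w => Complex.exp w + κ₀)^[n] z₀ = z₀ ∧
      ‖deriv ((fun w => Complex.exp w + κ₀)^[n]) z₀‖ = 1 := by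
  have hclos : κ₀ ∈ closure W := hκ₀.1
  have hnint : κ₀ ∉ interior W := hκ₀.2
  -- a sequence in W converging to κ₀
  obtain ⟨u, huW, hulim⟩ := mem_closure_iff_seq_limit.1 hclos
  set C : ℝ := ‖κ₀‖ + 1 with hC_def
  have hC0 : (0:ℝ) ≤ C := by positivity
  obtain ⟨N, hN⟩ := Metric.tendsto_atTop.1 hulim 1 one_pos
  set v : ℕ → ℂ := fun j => u (j + N) with hv_def
  have hvW : ∀ j, v j ∈ W := fun j => huW _
  have hvlim : Tendsto v atTop (𝓝 κ₀) := hulim.comp (tendsto_add_atTop_nat N)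
  have hvC : ∀ j, ‖v j‖ ≤ C := by
    intro j
    have h1 : dist (v j) κ₀ < 1 := hN _ (Nat.le_add_left N j)
    calc ‖v j‖ ≤ ‖v j - κ₀‖ + ‖κ₀‖ := by
          simpa using norm_add_le (v j - κ₀) κ₀
      _ ≤ C := by
          rw [hC_def]
          have : ‖v j - κ₀‖ = dist (v j) κ₀ := (dist_eq_norm _ _).symm
          rw [this]; linarith
  -- attracting periodic points along the sequence
  have hz : ∀ j, ∃ z : ℂ, (Ef (v j))^[n] z = z ∧ ‖mult n (v j, z)‖ < 1 := by
    intro j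
    obtain ⟨z, h1, h2⟩ := hattr (v j) (hvW j)
    rw [Ef_eq] at h1 h2
    rw [deriv_Ef_iter] at h2
    exact ⟨z, h1, h2⟩
  choose z hzfix hzm using hz
  set B : ℝ := (gfun C)^[n] (1 + C) with hB_def
  have hzB : ∀ j, z j ∈ closedBall (0:ℂ) B := by
    intro j
    rw [mem_closedBall, dist_zero_right]
    exact orbit_bound n hn C hC0 (v j) (z j) (hvC j) (hzfix j) (hzm j)
  obtain ⟨z₀, _, φ, hφ, hzlim⟩ := (isCompact_closedBall (0:ℂ) B).tendsto_subseq hzB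
  have hvφ : Tendsto (v ∘ φ) atTop (𝓝 κ₀) := hvlim.comp hφ.tendsto_atTop
  have hpair : Tendsto (fun j => (v (φ j), z (φ j))) atTop (𝓝 (κ₀, z₀)) :=
    hvφ.prodMk_nhds hzlim
  -- fixed point in the limit
  have hfix : (Ef κ₀)^[n] z₀ = z₀ := by
    have h1 : Tendsto (fun j => (Ef (v (φ j)))^[n] (z (φ j))) atTop (𝓝 ((Ef κ₀)^[n] z₀)) :=
      ((contIter n).tendsto (κ₀, z₀)).comp hpair
    have h2 : Tendsto (fun j => (Ef (v (φ j)))^[n] (z (φ j))) atTop (𝓝 z₀) := by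
      simpa only [hzfix, Function.comp_def] using hzlim
    exact tendsto_nhds_unique h1 h2
  -- multiplier modulus ≤ 1 in the limit
  have hmle : ‖mult n (κ₀, z₀)‖ ≤ 1 := by
    have h1 : Tendsto (fun j => ‖mult n (v (φ j), z (φ j))‖) atTop
        (𝓝 (‖mult n (κ₀, z₀)‖)) :=
      ((continuous_norm.comp (contMult n)).tendsto (κ₀, z₀)).comp hpair
    exact le_of_tendsto h1 (Eventually.of_forall fun j => (hzm (φ j)).le)
  rcases eq_or_lt_of_le hmle with heq | hlt
  · refine ⟨z₀, ?_, ?_⟩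
    · rw [Ef_eq]; exact hfix
    · rw [Ef_eq, deriv_Ef_iter]; exact heq
  -- strict attraction at κ₀ contradicts κ₀ being a boundary point
  exfalso
  obtain ⟨δ, hδ, hstab⟩ := attracting_stable n κ₀ z₀ hfix hlt
  have hballH : ball κ₀ δ ⊆ H := by
    intro κ hκ
    obtain ⟨w, hw1, hw2⟩ := hstab κ (by rwa [mem_ball] at hκ)
    rw [hH]
    refine ⟨n, hn, w, ?_, ?_⟩
    · rw [Ef_eq]; exact hw1
    · rw [Ef_eq, deriv_Ef_iter]; exact hw2
  obtain ⟨κ₁, hκ₁H, hWeq⟩ := hW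
  obtain ⟨p, hp1, hp2⟩ := _root_.mem_closure_iff.1 hclos (ball κ₀ δ) isOpen_ball
    (mem_ball_self hδ)
  have hWp : W = connectedComponentIn H p := by
    rw [hWeq]
    exact connectedComponentIn_eq (by rw [← hWeq]; exact hp2)
  have hballW : ball κ₀ δ ⊆ W := by
    rw [hWp]
    exact (convex_ball κ₀ δ).isPreconnected.subset_connectedComponentIn hp1 hballH
  exact hnint (mem_interior.2 ⟨ball κ₀ δ, hballW, isOpen_ball, mem_ball_self hδ⟩)
end

section
/- Fix an integer n ≥ 1 and λ ∈ ℂ with |λ| = 1. Then the set P = {κ ∈ ℂ : there exists z ∈ ℂ with E_κ^n(z) = z and (E_κ^n)′(z) = λ} is discrete in ℂ: every κ₀ ∈ P has a neighbourhood U ⊂ ℂ with U ∩ P = {κ₀}. -/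
open Complex Set Metric Function Filter Topology FormalMultilinearSeries

noncomputable section




/-- The exponential map `E_κ`. -/
def Ex (κ : ℂ) : ℂ → ℂ := fun w => Complex.exp w + κ

/-- Iterates. -/
def It (j : ℕ) (κ z : ℂ) : ℂ := (Ex κ)^[j] z

@[simp] lemma It_zero (κ z : ℂ) : It 0 κ z = z := rfl

lemma It_succ (j : ℕ) (κ z : ℂ) : It (j+1) κ z = Complex.exp (It j κ z) + κ := by
  simp [It, Function.iterate_succ_apply']; rfl

/-- Sum of the orbit. -/
def Sm (n : ℕ) (κ z : ℂ) : ℂ := ∑ i ∈ Finset.range n, It i κ z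

/-- κ-derivative of iterates. -/
def Dk : ℕ → ℂ → ℂ → ℂ
  | 0, _, _ => 0
  | (j+1), κ, z => Complex.exp (It j κ z) * Dk j κ z + 1

/-- κ-derivative of `Sm`. -/
def Dsm (n : ℕ) (κ z : ℂ) : ℂ := ∑ i ∈ Finset.range n, Dk i κ z

lemma continuous_It (j : ℕ) : Continuous fun p : ℂ × ℂ => It j p.1 p.2 := by
  induction j with
  | zero => exact continuous_snd
  | succ j ih =>
      simp only [It_succ]
      exact (Complex.continuous_exp.comp ih).add continuous_fst

lemma continuous_Sm (n : ℕ) : Continuous fun p : ℂ × ℂ => Sm n p.1 p.2 :=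
  continuous_finset_sum _ fun i _ => continuous_It i

lemma continuous_Dk (j : ℕ) : Continuous fun p : ℂ × ℂ => Dk j p.1 p.2 := by
  induction j with
  | zero => simpa [Dk] using continuous_const
  | succ j ih =>
      simp only [Dk]
      exact (((Complex.continuous_exp.comp (continuous_It j)).mul ih).add continuous_const)

lemma continuous_Dsm (n : ℕ) : Continuous fun p : ℂ × ℂ => Dsm n p.1 p.2 :=
  continuous_finset_sum _ fun i _ => continuous_Dk i

/-- z-derivative of the iterate. -/
lemma hasDerivAt_It_z (j : ℕ) (κ z : ℂ) :
    HasDerivAt (fun w => It j κ w) (Complex.exp (Sm j κ z)) z := by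
  induction j with
  | zero => simpa [Sm] using hasDerivAt_id' z
  | succ j ih =>
      have h1 : HasDerivAt (fun w => It (j+1) κ w)
          (Complex.exp (It j κ z) * Complex.exp (Sm j κ z)) z := by
        simp only [It_succ]
        exact ((Complex.hasDerivAt_exp _).comp z ih).add_const κ
      have : Complex.exp (It j κ z) * Complex.exp (Sm j κ z) = Complex.exp (Sm (j+1) κ z) := by
        rw [← Complex.exp_add]
        congr 1
        rw [Sm, Sm, Finset.sum_range_succ, add_comm]
      rwa [this] at h1

lemma deriv_It_z (j : ℕ) (κ z : ℂ) :
    deriv ((Ex κ)^[j]) z = Complex.exp (Sm j κ z) := (hasDerivAt_It_z j κ z).deriv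

/-- κ-derivative of the iterate. -/
lemma hasDerivAt_It_k (j : ℕ) (κ z : ℂ) :
    HasDerivAt (fun κ' => It j κ' z) (Dk j κ z) κ := by
  induction j with
  | zero => simpa [Dk] using hasDerivAt_const κ z
  | succ j ih =>
      simp only [It_succ, Dk]
      exact ((Complex.hasDerivAt_exp _).comp κ ih).add (hasDerivAt_id κ)

lemma hasDerivAt_Sm_k (n : ℕ) (κ z : ℂ) :
    HasDerivAt (fun κ' => Sm n κ' z) (Dsm n κ z) κ :=
  HasDerivAt.fun_sum fun i _ => hasDerivAt_It_k i κ z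



lemma norm_exp' (w : ℂ) : ‖Complex.exp w‖ = Real.exp w.re := Complex.norm_exp w

lemma It_add (i j : ℕ) (κ z : ℂ) : It (i + j) κ z = It i κ (It j κ z) := by
  simp [It, Function.iterate_add_apply]

lemma norm_It_succ_sub (j : ℕ) (κ z : ℂ) :
    ‖It (j+1) κ z - κ‖ = Real.exp ((It j κ z).re) := by
  rw [It_succ, add_sub_cancel_right]
  exact Complex.norm_exp _

lemma re_Sm (n : ℕ) (κ z : ℂ) : (Sm n κ z).re = ∑ i ∈ Finset.range n, (It i κ z).re := by
  simp [Sm, Complex.re_sum]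

/-- Window sum invariance for a periodic orbit. -/
lemma window_sum (n : ℕ) (κ z : ℂ) (hz : It n κ z = z) (k : ℕ) :
    ∑ i ∈ Finset.range n, (It (i + k) κ z).re = ∑ i ∈ Finset.range n, (It i κ z).re := by
  induction k with
  | zero => simp
  | succ k ih =>
      calc ∑ i ∈ Finset.range n, (It (i+(k+1)) κ z).re
          = ∑ i ∈ Finset.range n, (It ((i+1)+k) κ z).re := by
            apply Finset.sum_congr rfl; intro i _
            rw [show i+(k+1) = (i+1)+k from by omega]
        _ = (∑ i ∈ Finset.range (n+1), (It (i+k) κ z).re) - (It (0+k) κ z).re := by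
            rw [Finset.sum_range_succ' (fun i => (It (i+k) κ z).re) n]; ring
        _ = (∑ i ∈ Finset.range n, (It (i+k) κ z).re) + (It (n+k) κ z).re
              - (It (0+k) κ z).re := by
            rw [Finset.sum_range_succ]
        _ = ∑ i ∈ Finset.range n, (It i κ z).re := by
            have hper : It (n+k) κ z = It (0+k) κ z := by
              rw [zero_add, add_comm, It_add, hz]
            rw [hper, ih]; ring

/-- Bound sequence. -/
def Bd (C : ℝ) : ℕ → ℝ
  | 0 => C + 1
  | (j+1) => Real.exp (Bd C j) + C

lemma Bd_mono (C : ℝ) (hC : 0 ≤ C) : Monotone (Bd C) := by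
  apply monotone_nat_of_le_succ
  intro j
  have := Real.add_one_le_exp (Bd C j)
  simp only [Bd]; linarith

lemma norm_It_le (j : ℕ) (κ z : ℂ) (C : ℝ) (hκ : ‖κ‖ ≤ C) (h : ‖z‖ ≤ Bd C 0) :
    ‖It j κ z‖ ≤ Bd C j := by
  induction j with
  | zero => simpa using h
  | succ j ih =>
      rw [It_succ]
      calc ‖Complex.exp (It j κ z) + κ‖ ≤ ‖Complex.exp (It j κ z)‖ + ‖κ‖ := norm_add_le _ _
        _ ≤ Real.exp ((It j κ z).re) + C := by rw [norm_exp']; linarith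
        _ ≤ Real.exp (Bd C j) + C := by
            have h1 : (It j κ z).re ≤ ‖It j κ z‖ := Complex.re_le_norm _
            have := Real.exp_le_exp.mpr (le_trans h1 ih)
            linarith
        _ = Bd C (j+1) := rfl

/-- Exclusion: at `κ = -2` there is no periodic orbit whose multiplier has modulus 1. -/
lemma lemA (n : ℕ) (hn : 1 ≤ n) (z : ℂ) (hz : It n (-2) z = z) :
    (Sm n (-2) z).re ≠ 0 := by
  intro h0
  rw [re_Sm] at h0
  by_cases hb : ∀ i < n, (1:ℝ) ≤ ‖It (i+1) (-2) z - (-2)‖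
  · have hre : ∀ i ∈ Finset.range n, 0 ≤ (It i (-2) z).re := by
      intro i hi
      have h := hb i (Finset.mem_range.mp hi)
      rw [norm_It_succ_sub] at h
      exact Real.one_le_exp_iff.mp h
    have hall : ∀ i ∈ Finset.range n, (It i (-2) z).re = 0 :=
      (Finset.sum_eq_zero_iff_of_nonneg hre).mp h0
    have h00 : (It 0 (-2) z).re = 0 := hall 0 (Finset.mem_range.mpr hn)
    have h1 : (It 1 (-2) z).re ≤ -1 := by
      rw [show It 1 (-2) z = It (0+1) (-2) z from rfl, It_succ]
      have hle : (Complex.exp (It 0 (-2) z)).re ≤ 1 := by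
        calc (Complex.exp (It 0 (-2) z)).re ≤ ‖Complex.exp (It 0 (-2) z)‖ := Complex.re_le_norm _
          _ = Real.exp ((It 0 (-2) z).re) := norm_exp' _
          _ = 1 := by rw [h00, Real.exp_zero]
      have hre2 : (Complex.exp (It 0 (-2) z) + (-2:ℂ)).re
          = (Complex.exp (It 0 (-2) z)).re + (-2:ℝ) := by simp
      rw [hre2]; linarith
    rcases eq_or_lt_of_le hn with h | h
    · -- n = 1 : It 1 = z = It 0
      rw [← h] at hz
      have : It 1 (-2) z = It 0 (-2) z := by simpa using hz
      rw [this, h00] at h1; linarith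
    · have := hall 1 (Finset.mem_range.mpr h)
      linarith
  · push_neg at hb
    obtain ⟨i0, hi0n, hi0⟩ := hb
    have hstart : (It (i0+1) (-2) z).re ≤ -1 := by
      have h2 : |(It (i0+1) (-2) z - (-2)).re| ≤ ‖It (i0+1) (-2) z - (-2)‖ :=
        Complex.abs_re_le_norm _
      have h3 : (It (i0+1) (-2) z - (-2)).re < 1 := lt_of_le_of_lt (le_trans (le_abs_self _) h2) hi0
      have hre2 : (It (i0+1) (-2) z - (-2)).re = (It (i0+1) (-2) z).re + 2 := by simp
      rw [hre2] at h3; linarith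
    have hprop : ∀ j : ℕ, (It (i0+1+j) (-2) z).re ≤ -1 := by
      intro j
      induction j with
      | zero => simpa using hstart
      | succ j ih =>
          have heq : It (i0+1+(j+1)) (-2) z = Complex.exp (It (i0+1+j) (-2) z) + (-2) := by
            rw [show i0+1+(j+1) = (i0+1+j)+1 from by omega, It_succ]
          rw [heq]
          have hre : (Complex.exp (It (i0+1+j) (-2) z)).re ≤ Real.exp (-1) := by
            calc (Complex.exp (It (i0+1+j) (-2) z)).re ≤ ‖Complex.exp (It (i0+1+j) (-2) z)‖ :=
                Complex.re_le_norm _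
              _ = Real.exp ((It (i0+1+j) (-2) z).re) := norm_exp' _
              _ ≤ Real.exp (-1) := Real.exp_le_exp.mpr ih
          have hexp : Real.exp (-1) ≤ 1 := by
            rw [← Real.exp_zero]
            exact Real.exp_le_exp.mpr (by norm_num)
          have hre3 : (Complex.exp (It (i0+1+j) (-2) z) + (-2:ℂ)).re
              = (Complex.exp (It (i0+1+j) (-2) z)).re + (-2:ℝ) := by simp
          rw [hre3]; linarith
    have hw := window_sum n (-2) z hz (i0+1)
    rw [h0] at hw
    have hneg : ∑ i ∈ Finset.range n, (It (i + (i0+1)) (-2) z).re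
        ≤ ∑ i ∈ Finset.range n, (-1:ℝ) := by
      apply Finset.sum_le_sum
      intro i _
      have := hprop i
      rwa [show i0+1+i = i + (i0+1) from by omega] at this
    rw [hw] at hneg
    simp at hneg
    have : (0:ℝ) < n := by exact_mod_cast hn
    linarith

/-- Boundedness: orbits with multiplier of modulus one are bounded in terms of `‖κ‖`. -/
lemma lemB (n : ℕ) (hn : 1 ≤ n) (κ z : ℂ) (C : ℝ) (hC : 0 ≤ C) (hκ : ‖κ‖ ≤ C)
    (hz : It n κ z = z) (hre : (Sm n κ z).re = 0) : ‖z‖ ≤ Bd C (n-1) := by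
  rw [re_Sm] at hre
  by_cases hb : ∀ i < n, (1:ℝ) ≤ ‖It (i+1) κ z - κ‖
  · have hge : ∀ i ∈ Finset.range n, 0 ≤ (It i κ z).re := by
      intro i hi
      have h := hb i (Finset.mem_range.mp hi)
      rw [norm_It_succ_sub] at h
      exact Real.one_le_exp_iff.mp h
    have hall : ∀ i ∈ Finset.range n, (It i κ z).re = 0 :=
      (Finset.sum_eq_zero_iff_of_nonneg hge).mp hre
    have hlast : (It (n-1) κ z).re = 0 := hall (n-1) (Finset.mem_range.mpr (by omega))
    have hone : ‖It n κ z - κ‖ = 1 := by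
      rw [show n = (n-1)+1 from by omega, norm_It_succ_sub, hlast, Real.exp_zero]
    have hzb : ‖z‖ ≤ 1 + C := by
      calc ‖z‖ = ‖It n κ z‖ := by rw [hz]
        _ ≤ ‖It n κ z - κ‖ + ‖κ‖ := by
            simpa using norm_add_le (It n κ z - κ) κ
        _ ≤ 1 + C := by rw [hone]; linarith
    calc ‖z‖ ≤ 1 + C := hzb
      _ ≤ Bd C 0 := by simp [Bd]; linarith
      _ ≤ Bd C (n-1) := Bd_mono C hC (Nat.zero_le _)
  · push_neg at hb
    obtain ⟨i0, hi0n, hi0⟩ := hb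
    have hstart : ‖It (i0+1) κ z‖ ≤ Bd C 0 := by
      have h := norm_add_le (It (i0+1) κ z - κ) κ
      simp only [sub_add_cancel] at h
      simp only [Bd]
      linarith [le_of_lt hi0]
    have hchain : ∀ j : ℕ, ‖It (i0+1+j) κ z‖ ≤ Bd C j := by
      intro j
      have h := norm_It_le j κ (It (i0+1) κ z) C hκ hstart
      rw [← It_add] at h
      rwa [show j + (i0+1) = i0+1+j from by omega] at h
    have hfin := hchain (n-1-i0)
    rw [show i0+1+(n-1-i0) = n from by omega, hz] at hfin
    exact le_trans hfin (Bd_mono C hC (by omega))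

/-- For each κ the map `E_κ^n` has a non-fixed point. -/
lemma exists_not_fixed (n : ℕ) (hn : 1 ≤ n) (κ : ℂ) : ∃ z : ℂ, It n κ z ≠ z := by
  classical
  set C := ‖κ‖ with hC
  have hC0 : 0 ≤ C := norm_nonneg κ
  set t : ℝ := -(|Bd C (n-1)| + 1) with ht
  refine ⟨(t : ℂ), fun hfix => ?_⟩
  have ht0 : t ≤ 0 := by
    have : 0 ≤ |Bd C (n-1)| + 1 := by positivity
    simp only [ht]; linarith
  have h1 : ‖It 1 κ (t:ℂ)‖ ≤ Bd C 0 := by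
    rw [show (1:ℕ) = 0+1 from rfl, It_succ]
    have hexp : Real.exp ((It 0 κ (t:ℂ)).re) ≤ 1 := by
      rw [← Real.exp_zero]
      apply Real.exp_le_exp.mpr
      simpa using ht0
    calc ‖Complex.exp (It 0 κ (t:ℂ)) + κ‖ ≤ ‖Complex.exp (It 0 κ (t:ℂ))‖ + ‖κ‖ := norm_add_le _ _
      _ = Real.exp ((It 0 κ (t:ℂ)).re) + C := by rw [norm_exp']
      _ ≤ 1 + C := by linarith
      _ = Bd C 0 := by simp [Bd]; ring
  have h2 : ‖It n κ (t:ℂ)‖ ≤ Bd C (n-1) := by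
    have h := norm_It_le (n-1) κ (It 1 κ (t:ℂ)) C le_rfl h1
    rw [← It_add] at h
    rwa [show (n-1) + 1 = n from by omega] at h
  rw [hfix] at h2
  have hnt : ‖(t:ℂ)‖ = |Bd C (n-1)| + 1 := by
    rw [Complex.norm_real, Real.norm_eq_abs]
    simp only [ht]
    rw [abs_neg]
    exact abs_of_nonneg (by positivity)
  rw [hnt] at h2
  have : Bd C (n-1) ≤ |Bd C (n-1)| := le_abs_self _
  linarith



lemma circleIntegral_add' {f g : ℂ → ℂ} {c : ℂ} {R : ℝ} (hf : CircleIntegrable f c R)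
    (hg : CircleIntegrable g c R) :
    (∮ z in C(c,R), (f z + g z)) = (∮ z in C(c,R), f z) + ∮ z in C(c,R), g z := by
  simp only [circleIntegral, smul_add, intervalIntegral.integral_add hf.out hg.out]

lemma PP_diff (M : Multiset ℂ) : Differentiable ℂ (fun z => (M.map (fun a => z - a)).prod) := by
  induction M using Multiset.induction_on with
  | empty => simpa using differentiable_const (1:ℂ)
  | cons a M ih =>
      have heq : (fun z => ((a ::ₘ M).map (fun a => z - a)).prod)
          = fun z => (z - a) * (M.map (fun a => z - a)).prod := by
        funext z; simp
      rw [heq]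
      exact (differentiable_id.sub_const a).mul ih

lemma PP_ne (M : Multiset ℂ) (z : ℂ) (h : ∀ a ∈ M, a ≠ z) :
    (M.map (fun a => z - a)).prod ≠ 0 := by
  apply Multiset.prod_ne_zero
  intro h0
  obtain ⟨a, ha, he⟩ := Multiset.mem_map.mp h0
  exact h a ha (by linear_combination -he)

section Zeros

variable {c : ℂ} {r R : ℝ}

lemma sphere_subset_ballR (hr : 0 ≤ r) (hrR : r < R) : sphere c r ⊆ ball c R := fun z hz => by
  rw [mem_sphere] at hz; rw [mem_ball, hz]; exact hrR

lemma not_locally_zero (hr : 0 < r) (hrR : r < R) {G : ℂ → ℂ}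
    (hG : DifferentiableOn ℂ G (ball c R)) (hsph : ∀ z ∈ sphere c r, G z ≠ 0)
    {x : ℂ} (hx : x ∈ ball c R) : ¬ ∀ᶠ z in 𝓝 x, G z = 0 := by
  intro h
  have hEq : EqOn G 0 (ball c R) := by
    apply (hG.analyticOnNhd isOpen_ball).eqOn_zero_of_preconnected_of_eventuallyEq_zero
      (convex_ball c R).isPreconnected hx
    exact h
  have hcr : (c + r : ℂ) ∈ sphere c r := by
    simp [Complex.dist_eq, abs_of_pos hr]
  exact hsph _ hcr (hEq (sphere_subset_ballR hr.le hrR hcr))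

lemma zeros_finite (hr : 0 < r) (hrR : r < R) {G : ℂ → ℂ}
    (hG : DifferentiableOn ℂ G (ball c R)) (hsph : ∀ z ∈ sphere c r, G z ≠ 0) :
    {z | z ∈ closedBall c r ∧ G z = 0}.Finite := by
  by_contra hinf
  have hinf' : {z | z ∈ closedBall c r ∧ G z = 0}.Infinite := hinf
  obtain ⟨x, hxK, hacc⟩ := hinf'.exists_accPt_of_subset_isCompact
    (isCompact_closedBall c r) (fun z hz => hz.1)
  have hxR : x ∈ ball c R := lt_of_le_of_lt (mem_closedBall.mp hxK) hrR
  have hfreq : ∃ᶠ z in 𝓝[≠] x, G z = 0 := by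
    have h1 := (accPt_iff_frequently).mp hacc
    rw [frequently_nhdsWithin_iff]
    exact h1.mono fun y hy => ⟨hy.2.2, hy.1⟩
  exact not_locally_zero hr hrR hG hsph hxR
    (((hG.analyticOnNhd isOpen_ball) x hxR).frequently_zero_iff_eventually_zero.mp hfreq)

lemma iter_dslope_diff {G : ℂ → ℂ} {a : ℂ} {p : FormalMultilinearSeries ℂ ℂ ℂ}
    (hG : DifferentiableOn ℂ G (ball c R)) (haR : a ∈ ball c R)
    (hp : HasFPowerSeriesAt G p a) (k : ℕ) :
    DifferentiableOn ℂ ((Function.swap dslope a)^[k] G) (ball c R) := by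
  induction k with
  | zero => simpa using hG
  | succ k ih =>
      intro b hb
      rcases eq_or_ne b a with rfl | hba
      · have han : AnalyticAt ℂ ((Function.swap dslope b)^[k+1] G) b :=
          ⟨_, hp.has_fpower_series_iterate_dslope_fslope (k+1)⟩
        exact han.differentiableAt.differentiableWithinAt
      · rw [Function.iterate_succ_apply']
        exact ((differentiableAt_dslope_of_ne hba).mpr
          (ih.differentiableAt (isOpen_ball.mem_nhds hb))).differentiableWithinAt

lemma iter_dslope_val {G : ℂ → ℂ} {a : ℂ} {p : FormalMultilinearSeries ℂ ℂ ℂ}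
    (hp : HasFPowerSeriesAt G p a) (k : ℕ) :
    ((Function.swap dslope a)^[k] G) a = p.coeff k := by
  obtain ⟨rr, hb⟩ := hp.has_fpower_series_iterate_dslope_fslope k
  have h := hb.coeff_zero (fun _ => 1)
  have h2 : (fslope^[k] p).coeff 0 = p.coeff k := by
    rw [FormalMultilinearSeries.coeff_iterate_fslope]; norm_num
  rw [← h2]
  exact h.symm

/-- Factorization of a holomorphic function on a disc into a polynomial part carrying the
zeros in the closed subdisc and a nonvanishing part. -/
lemma FACT (hr : 0 < r) (hrR : r < R) {G : ℂ → ℂ}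
    (hG : DifferentiableOn ℂ G (ball c R)) (hsph : ∀ z ∈ sphere c r, G z ≠ 0) :
    ∃ (M : Multiset ℂ) (H : ℂ → ℂ),
      (∀ a ∈ M, a ∈ ball c r) ∧
      DifferentiableOn ℂ H (ball c R) ∧
      (∀ z ∈ closedBall c r, H z ≠ 0) ∧
      (∀ z ∈ ball c R, G z = (M.map (fun a => z - a)).prod * H z) ∧
      (∀ z ∈ closedBall c r, (G z = 0 ↔ z ∈ M)) := by
  classical
  suffices haux : ∀ (N : ℕ) (G : ℂ → ℂ) (hG : DifferentiableOn ℂ G (ball c R))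
      (hsph : ∀ z ∈ sphere c r, G z ≠ 0),
      (zeros_finite hr hrR hG hsph).toFinset.card ≤ N →
      ∃ (M : Multiset ℂ) (H : ℂ → ℂ),
        (∀ a ∈ M, a ∈ ball c r) ∧
        DifferentiableOn ℂ H (ball c R) ∧
        (∀ z ∈ closedBall c r, H z ≠ 0) ∧
        (∀ z ∈ ball c R, G z = (M.map (fun a => z - a)).prod * H z) ∧
        (∀ z ∈ closedBall c r, (G z = 0 ↔ z ∈ M)) by
    exact haux (zeros_finite hr hrR hG hsph).toFinset.card G hG hsph le_rfl
  intro N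
  induction N with
  | zero =>
      intro G hG hsph hN
      -- no zeros at all
      have hno : ∀ z ∈ closedBall c r, G z ≠ 0 := by
        intro z hz h0
        have : z ∈ (zeros_finite hr hrR hG hsph).toFinset := by
          simp [Set.Finite.mem_toFinset]; exact ⟨hz, h0⟩
        have := Finset.card_pos.mpr ⟨z, this⟩
        omega
      exact ⟨0, G, by simp, hG, hno, by simp, fun z hz => by
        simp only [Multiset.notMem_zero, iff_false]; exact hno z hz⟩
  | succ N ih =>
      intro G hG hsph hN
      by_cases hno : ∀ z ∈ closedBall c r, G z ≠ 0
      · exact ⟨0, G, by simp, hG, hno, by simp, fun z hz => by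
          simp only [Multiset.notMem_zero, iff_false]; exact hno z hz⟩
      push_neg at hno
      obtain ⟨a, hacb, ha0⟩ := hno
      have har : a ∈ ball c r := by
        rcases lt_or_eq_of_le (mem_closedBall.mp hacb) with h | h
        · exact mem_ball.mpr h
        · exact absurd ha0 (hsph a (mem_sphere.mpr h))
      have haR : a ∈ ball c R := lt_trans (mem_ball.mp har) hrR
      obtain ⟨p, hp⟩ : AnalyticAt ℂ G a := (hG.analyticOnNhd isOpen_ball) a haR
      have hp0 : p ≠ 0 := by
        intro h
        exact not_locally_zero hr hrR hG hsph haR (hp.locally_zero_iff.mpr h)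
      set m := p.order with hm
      have hm0 : m ≠ 0 := by
        intro h
        have h1 : p p.order ≠ 0 := FormalMultilinearSeries.apply_order_ne_zero hp0
        have h2 : p.coeff 0 = G a := (iter_dslope_val hp 0).symm
        rw [ha0] at h2
        rw [← hm, h] at h1
        exact h1 (FormalMultilinearSeries.coeff_eq_zero.mp h2)
      set Gm := (Function.swap dslope a)^[m] G with hGmdef
      have hGa : Gm a ≠ 0 := hp.iterate_dslope_fslope_ne_zero hp0
      have hGmd : DifferentiableOn ℂ Gm (ball c R) := iter_dslope_diff hG haR hp m
      have hfac : ∀ z, (z - a)^m * Gm z = G z := by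
        have main : ∀ k, k ≤ m → ∀ z, (z - a)^k * ((Function.swap dslope a)^[k] G) z = G z := by
          intro k
          induction k with
          | zero => intro _ z; simp
          | succ k ihk =>
              intro hk z
              have hk' : k < m := Nat.lt_of_succ_le hk
              have hval : ((Function.swap dslope a)^[k] G) a = 0 := by
                rw [iter_dslope_val hp k]
                exact FormalMultilinearSeries.coeff_eq_zero.mpr
                  (FormalMultilinearSeries.apply_eq_zero_of_lt_order hk')
              have hss : (Function.swap dslope a)^[k+1] G
                  = dslope ((Function.swap dslope a)^[k] G) a := Function.iterate_succ_apply' _ _ _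
              rw [hss]
              have hd := sub_smul_dslope ((Function.swap dslope a)^[k] G) a z
              rw [hval, sub_zero, smul_eq_mul] at hd
              calc (z-a)^(k+1) * dslope ((Function.swap dslope a)^[k] G) a z
                  = (z-a)^k * ((z-a) * dslope ((Function.swap dslope a)^[k] G) a z) := by ring
                _ = (z-a)^k * ((Function.swap dslope a)^[k] G) z := by rw [hd]
                _ = G z := ihk (le_of_lt hk') z
        exact main m le_rfl
      have hGm_sph : ∀ z ∈ sphere c r, Gm z ≠ 0 := by
        intro z hz h0
        apply hsph z hz
        rw [← hfac z, h0, mul_zero]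
      -- zero set decreases
      have hsub : (zeros_finite hr hrR hGmd hGm_sph).toFinset
          ⊆ (zeros_finite hr hrR hG hsph).toFinset.erase a := by
        intro z hz
        rw [Set.Finite.mem_toFinset] at hz
        have hza : z ≠ a := fun h => hGa (h ▸ hz.2)
        rw [Finset.mem_erase, Set.Finite.mem_toFinset]
        exact ⟨hza, hz.1, by rw [← hfac z, hz.2, mul_zero]⟩
      have hmem : a ∈ (zeros_finite hr hrR hG hsph).toFinset := by
        rw [Set.Finite.mem_toFinset]; exact ⟨hacb, ha0⟩
      have hcard : (zeros_finite hr hrR hGmd hGm_sph).toFinset.card ≤ N := by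
        calc (zeros_finite hr hrR hGmd hGm_sph).toFinset.card
            ≤ ((zeros_finite hr hrR hG hsph).toFinset.erase a).card := Finset.card_le_card hsub
          _ = (zeros_finite hr hrR hG hsph).toFinset.card - 1 := Finset.card_erase_of_mem hmem
          _ ≤ N := by omega
      obtain ⟨M', H, hM'mem, hHd, hHne, hfac', hiff⟩ := ih Gm hGmd hGm_sph hcard
      refine ⟨Multiset.replicate m a + M', H, ?_, hHd, hHne, ?_, ?_⟩
      · intro b hb
        rcases Multiset.mem_add.mp hb with hb | hb
        · rw [Multiset.eq_of_mem_replicate hb]; exact har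
        · exact hM'mem b hb
      · intro z hz
        rw [← hfac z, hfac' z hz]
        rw [Multiset.map_add, Multiset.prod_add, Multiset.map_replicate, Multiset.prod_replicate]
        ring
      · intro z hz
        rw [← hfac z]
        constructor
        · intro h0
          rcases mul_eq_zero.mp h0 with h | h
          · have : z = a := by
              have := pow_eq_zero_iff hm0 |>.mp h
              linear_combination this
            rw [Multiset.mem_add, Multiset.mem_replicate]
            exact Or.inl ⟨hm0, this⟩
          · exact Multiset.mem_add.mpr (Or.inr ((hiff z hz).mp h))
        · intro hmem
          rcases Multiset.mem_add.mp hmem with hb | hb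
          · rw [Multiset.eq_of_mem_replicate hb]
            simp [zero_pow hm0]
          · rw [(hiff z hz).mpr hb, mul_zero]

end Zeros

/-- Weighted argument principle. -/
lemma AP {c : ℂ} {r R : ℝ} (hr : 0 < r) (hrR : r < R) {φ : ℂ → ℂ}
    (hφ : DifferentiableOn ℂ φ (ball c R)) :
    ∀ (M : Multiset ℂ), (∀ a ∈ M, a ∈ ball c r) →
    ∀ (G H : ℂ → ℂ), DifferentiableOn ℂ H (ball c R) → (∀ z ∈ closedBall c r, H z ≠ 0) →
    (∀ z ∈ ball c R, G z = (M.map (fun a => z - a)).prod * H z) →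
    (∮ z in C(c, r), φ z * deriv G z / G z)
      = (2 * Real.pi * Complex.I) * (M.map φ).sum := by
  classical
  have hcb_sub : closedBall c r ⊆ ball c R := closedBall_subset_ball hrR
  intro M
  induction M using Multiset.induction_on with
  | empty =>
      intro _ G H hHd hHne hfacG
      have hGH : EqOn G H (ball c R) := fun z hz => by simpa using hfacG z hz
      have hGd : DifferentiableOn ℂ G (ball c R) := hHd.congr hGH
      have hder : AnalyticOnNhd ℂ (deriv G) (ball c R) :=
        (hGd.analyticOnNhd isOpen_ball).deriv
      have hGne : ∀ z ∈ closedBall c r, G z ≠ 0 := fun z hz => by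
        rw [hGH (hcb_sub hz)]; exact hHne z hz
      have hzero : (∮ z in C(c, r), φ z * deriv G z / G z) = 0 := by
        apply circleIntegral_eq_zero_of_differentiable_on_off_countable hr.le
          Set.countable_empty
        · apply ContinuousOn.div
          · exact ((hφ.continuousOn.mono hcb_sub).mul
              ((hder.continuousOn).mono hcb_sub))
          · exact (hGd.continuousOn).mono hcb_sub
          · exact hGne
        · rintro z ⟨hz, -⟩
          have hzR : z ∈ ball c R := ball_subset_ball hrR.le hz
          have h1 : DifferentiableAt ℂ φ z := hφ.differentiableAt (isOpen_ball.mem_nhds hzR)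
          have h2 : DifferentiableAt ℂ (deriv G) z :=
            (hder z hzR).differentiableAt
          have h3 : DifferentiableAt ℂ G z := hGd.differentiableAt (isOpen_ball.mem_nhds hzR)
          exact (h1.mul h2).div h3 (hGne z (ball_subset_closedBall hz))
      rw [hzero]; simp
  | cons a M' ihM =>
      intro hmem G H hHd hHne hfacG
      have har : a ∈ ball c r := hmem a (Multiset.mem_cons_self a M')
      have hM'mem : ∀ b ∈ M', b ∈ ball c r := fun b hb => hmem b (Multiset.mem_cons_of_mem hb)
      set G₁ : ℂ → ℂ := fun z => (M'.map (fun b => z - b)).prod * H z with hG₁def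
      have hG₁d : DifferentiableOn ℂ G₁ (ball c R) :=
        (PP_diff M').differentiableOn.mul hHd
      have hIH := ihM hM'mem G₁ H hHd hHne (fun z _ => rfl)
      have hfac2 : ∀ z ∈ ball c R, G z = (z - a) * G₁ z := by
        intro z hz
        rw [hfacG z hz, hG₁def]
        simp only [Multiset.map_cons, Multiset.prod_cons]
        ring
      have hderiv : ∀ z ∈ ball c R, deriv G z = G₁ z + (z - a) * deriv G₁ z := by
        intro z hz
        have hd1 : HasDerivAt G₁ (deriv G₁ z) z :=
          (hG₁d.differentiableAt (isOpen_ball.mem_nhds hz)).hasDerivAt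
        have hd2 : HasDerivAt (fun w => (w - a) * G₁ w)
            (1 * G₁ z + (z - a) * deriv G₁ z) z :=
          ((hasDerivAt_id z).sub_const a).mul hd1
        have hev : (fun w => (w - a) * G₁ w) =ᶠ[𝓝 z] G := by
          filter_upwards [isOpen_ball.mem_nhds hz] with w hw
          exact (hfac2 w hw).symm
        have := (hd2.congr_of_eventuallyEq hev.symm).deriv
        rw [this]; ring
      -- nonvanishing on the sphere
      have hG₁ne_sph : ∀ z ∈ sphere c r, G₁ z ≠ 0 := by
        intro z hz
        apply mul_ne_zero
        · apply PP_ne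
          intro b hb hbz
          have h1 : dist z c = r := mem_sphere.mp hz
          have h2 : dist b c < r := mem_ball.mp (hM'mem b hb)
          rw [hbz] at h2
          exact (ne_of_lt h2) h1
        · exact hHne z (sphere_subset_closedBall hz)
      have hza_sph : ∀ z ∈ sphere c r, z - a ≠ 0 := by
        intro z hz h0
        have h1 : dist z c = r := mem_sphere.mp hz
        have h2 : dist a c < r := mem_ball.mp har
        have : z = a := by linear_combination h0
        rw [this] at h1
        rw [h1] at h2
        exact lt_irrefl r h2
      -- integrand splitting
      have hsplit : EqOn (fun z => φ z * deriv G z / G z)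
          (fun z => φ z / (z - a) + φ z * deriv G₁ z / G₁ z) (sphere c r) := by
        intro z hz
        have hzR : z ∈ ball c R := sphere_subset_ballR hr.le hrR hz
        have h1 := hza_sph z hz
        have h2 := hG₁ne_sph z hz
        show φ z * deriv G z / G z = φ z / (z - a) + φ z * deriv G₁ z / G₁ z
        rw [hderiv z hzR, hfac2 z hzR]
        field_simp
      -- integrability of both pieces
      have hsph_cont_φ : ContinuousOn φ (sphere c r) :=
        (hφ.continuousOn).mono ((sphere_subset_closedBall).trans hcb_sub)
      have hder1 : AnalyticOnNhd ℂ (deriv G₁) (ball c R) :=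
        (hG₁d.analyticOnNhd isOpen_ball).deriv
      have hint1 : CircleIntegrable (fun z => φ z / (z - a)) c r := by
        apply ContinuousOn.circleIntegrable hr.le
        apply ContinuousOn.div hsph_cont_φ
        · exact (continuous_id.sub continuous_const).continuousOn
        · exact hza_sph
      have hint2 : CircleIntegrable (fun z => φ z * deriv G₁ z / G₁ z) c r := by
        apply ContinuousOn.circleIntegrable hr.le
        apply ContinuousOn.div
        · exact hsph_cont_φ.mul
            ((hder1.continuousOn).mono ((sphere_subset_closedBall).trans hcb_sub))
        · exact (hG₁d.continuousOn).mono ((sphere_subset_closedBall).trans hcb_sub)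
        · exact hG₁ne_sph
      have hCauchy : (∮ z in C(c, r), φ z / (z - a)) = 2 * Real.pi * Complex.I * φ a := by
        apply circleIntegral_div_sub_of_differentiable_on_off_countable Set.countable_empty har
        · exact (hφ.continuousOn).mono hcb_sub
        · rintro z ⟨hz, -⟩
          exact hφ.differentiableAt (isOpen_ball.mem_nhds (ball_subset_ball hrR.le hz))
      calc (∮ z in C(c, r), φ z * deriv G z / G z)
          = ∮ z in C(c, r), (φ z / (z - a) + φ z * deriv G₁ z / G₁ z) :=
            circleIntegral.integral_congr hr.le hsplit
        _ = (∮ z in C(c, r), φ z / (z - a)) + ∮ z in C(c, r), φ z * deriv G₁ z / G₁ z :=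
            circleIntegral_add' hint1 hint2
        _ = 2 * Real.pi * Complex.I * φ a
              + (2 * Real.pi * Complex.I) * (M'.map φ).sum := by rw [hCauchy, hIH]
        _ = (2 * Real.pi * Complex.I) * ((a ::ₘ M').map φ).sum := by
            simp only [Multiset.map_cons, Multiset.sum_cons]; ring



/-- Holomorphic dependence of a circle integral on a parameter. -/
lemma PARAM {V W : Set ℂ} (hV : IsOpen V) {c : ℂ} {r : ℝ} (hr : 0 < r)
    (hsphW : sphere c r ⊆ W) (f f' : ℂ → ℂ → ℂ)
    (hf : ContinuousOn (fun p : ℂ × ℂ => f p.1 p.2) (V ×ˢ W))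
    (hf' : ContinuousOn (fun p : ℂ × ℂ => f' p.1 p.2) (V ×ˢ W))
    (hd : ∀ κ ∈ V, ∀ z ∈ W, HasDerivAt (fun κ' => f κ' z) (f' κ z) κ) :
    ∀ κ₀ ∈ V, HasDerivAt (fun κ => ∮ z in C(c, r), f κ z)
      (∮ z in C(c, r), f' κ₀ z) κ₀ := by
  intro κ₀ hκ₀
  obtain ⟨ε', hε', hball⟩ := Metric.mem_nhds_iff.mp (hV.mem_nhds hκ₀)
  set ε := ε'/2 with hεdef
  have hεpos : 0 < ε := by positivity
  have hcb : closedBall κ₀ ε ⊆ V := by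
    refine subset_trans ?_ hball
    intro x hx
    rw [mem_closedBall] at hx
    rw [mem_ball]
    calc dist x κ₀ ≤ ε := hx
      _ < ε' := by rw [hεdef]; linarith
  have hballV : ball κ₀ ε ⊆ V := ball_subset_closedBall.trans hcb
  -- continuity of slices
  have hslice : ∀ x ∈ V, Continuous fun θ : ℝ => f x (circleMap c r θ) := by
    intro x hx
    have h1 : ContinuousOn (fun z => f x z) W := by
      have : ContinuousOn (fun z : ℂ => ((x, z) : ℂ × ℂ)) W :=
        (continuous_const.prodMk continuous_id).continuousOn
      exact hf.comp this (fun z hz => ⟨hx, hz⟩)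
    exact h1.comp_continuous (continuous_circleMap c r)
      (fun θ => hsphW (circleMap_mem_sphere c hr.le θ))
  have hslice' : ∀ x ∈ V, Continuous fun θ : ℝ => f' x (circleMap c r θ) := by
    intro x hx
    have h1 : ContinuousOn (fun z => f' x z) W := by
      have : ContinuousOn (fun z : ℂ => ((x, z) : ℂ × ℂ)) W :=
        (continuous_const.prodMk continuous_id).continuousOn
      exact hf'.comp this (fun z hz => ⟨hx, hz⟩)
    exact h1.comp_continuous (continuous_circleMap c r)
      (fun θ => hsphW (circleMap_mem_sphere c hr.le θ))
  -- uniform bound on f' over compact set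
  have hK : IsCompact ((closedBall κ₀ ε) ×ˢ (sphere c r)) :=
    (isCompact_closedBall κ₀ ε).prod (isCompact_sphere c r)
  have hKsub : (closedBall κ₀ ε) ×ˢ (sphere c r) ⊆ V ×ˢ W := by
    intro p hp; exact ⟨hcb hp.1, hsphW hp.2⟩
  obtain ⟨B, hB⟩ := hK.exists_bound_of_continuousOn (hf'.mono hKsub)
  -- set up F
  set F : ℂ → ℝ → ℂ := fun κ θ => (circleMap 0 r θ * I) • f κ (circleMap c r θ) with hF
  set F' : ℂ → ℝ → ℂ := fun κ θ => (circleMap 0 r θ * I) • f' κ (circleMap c r θ) with hF'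
  have key : IntervalIntegrable (F' κ₀) MeasureTheory.volume 0 (2*Real.pi) ∧
      HasDerivAt (fun κ => ∫ θ in (0:ℝ)..(2*Real.pi), F κ θ)
        (∫ θ in (0:ℝ)..(2*Real.pi), F' κ₀ θ) κ₀ := by
    apply intervalIntegral.hasDerivAt_integral_of_dominated_loc_of_deriv_le
        (bound := fun _ => |r| * B) (ball_mem_nhds κ₀ hεpos)
    · filter_upwards [hV.mem_nhds hκ₀] with x hx
      exact (((continuous_circleMap 0 r).mul continuous_const).smul
        (hslice x hx)).aestronglyMeasurable
    · exact (((continuous_circleMap 0 r).mul continuous_const).smul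
        (hslice κ₀ hκ₀)).intervalIntegrable _ _
    · exact (((continuous_circleMap 0 r).mul continuous_const).smul
        (hslice' κ₀ hκ₀)).aestronglyMeasurable
    · apply Filter.Eventually.of_forall
      intro θ _ x hx
      have hmem : ((x, circleMap c r θ) : ℂ × ℂ) ∈ (closedBall κ₀ ε) ×ˢ (sphere c r) :=
        ⟨ball_subset_closedBall hx, circleMap_mem_sphere c hr.le θ⟩
      have := hB _ hmem
      calc ‖F' x θ‖ = ‖circleMap 0 r θ * I‖ * ‖f' x (circleMap c r θ)‖ := norm_smul _ _
        _ ≤ |r| * B := by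
            have h1 : ‖circleMap 0 r θ * I‖ = |r| := by
              rw [norm_mul]
              simp [norm_circleMap_zero]
            rw [h1]
            apply mul_le_mul_of_nonneg_left _ (abs_nonneg r)
            exact this
    · exact intervalIntegrable_const
    · apply Filter.Eventually.of_forall
      intro θ _ x hx
      exact ((hd x (hballV hx) (circleMap c r θ)
        (hsphW (circleMap_mem_sphere c hr.le θ))).fun_const_smul _)
  have h2 := key.2
  simpa only [circleIntegral, deriv_circleMap] using h2


section Stage5

variable {n : ℕ}

lemma diff_It_z (j : ℕ) (κ : ℂ) : Differentiable ℂ (fun w => It j κ w) :=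
  fun z => (hasDerivAt_It_z j κ z).differentiableAt

lemma hasDerivAt_Sm_z (n : ℕ) (κ z : ℂ) :
    HasDerivAt (fun w => Sm n κ w) (∑ i ∈ Finset.range n, Complex.exp (Sm i κ z)) z :=
  HasDerivAt.fun_sum fun i _ => hasDerivAt_It_z i κ z

lemma diff_Sm_z (n : ℕ) (κ : ℂ) : Differentiable ℂ (fun w => Sm n κ w) :=
  fun z => (hasDerivAt_Sm_z n κ z).differentiableAt

lemma gderiv (n : ℕ) (κ z : ℂ) :
    HasDerivAt (fun w => It n κ w - w) (Complex.exp (Sm n κ z) - 1) z :=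
  (hasDerivAt_It_z n κ z).sub (hasDerivAt_id z)

lemma gderiv' (n : ℕ) (κ : ℂ) :
    deriv (fun w => It n κ w - w) = fun z => Complex.exp (Sm n κ z) - 1 :=
  funext fun z => (gderiv n κ z).deriv

lemma expMultisetSum (M : Multiset ℂ) (f : ℂ → ℂ) :
    Complex.exp ((M.map f).sum) = (M.map (fun a => Complex.exp (f a))).prod := by
  induction M using Multiset.induction_on with
  | empty => simp
  | cons a M ih => simp [Complex.exp_add, ih]

lemma re_sub_lower (x : ℝ) (w : ℂ) : x - ‖w‖ ≤ ((x:ℂ) - w).re := by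
  have h1 : ((x:ℂ) - w).re = x - w.re := by simp
  have h2 : w.re ≤ ‖w‖ := Complex.re_le_norm w
  linarith

/-- The 2πi constant. -/
def tPI : ℂ := 2 * Real.pi * Complex.I

lemma tPI_ne : tPI ≠ 0 := by
  simp [tPI, Complex.I_ne_zero, Real.pi_ne_zero, Complex.ext_iff, Real.pi_pos.ne']

/-- Local data: factorization and evaluated contour integrals for every parameter in `V`. -/
lemma LOCALDATA (n : ℕ) (z₀ S₀ : ℂ) (r R : ℝ) (hr : 0 < r) (hrR : r < R)
    (V W : Set ℂ) (hsphW : sphere z₀ r ⊆ W)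
    (hgne : ∀ κ ∈ V, ∀ z ∈ W, It n κ z - z ≠ 0)
    (Xb : ℝ) (hXb : ∀ κ ∈ V, ∀ z ∈ closedBall z₀ R, ‖Sm n κ z - S₀‖ + 1 ≤ Xb) :
    ∀ κ ∈ V, ∃ M : Multiset ℂ,
      (∀ a ∈ M, a ∈ ball z₀ r) ∧
      (∀ z ∈ closedBall z₀ r, (It n κ z - z = 0 ↔ z ∈ M)) ∧
      ((∮ z in C(z₀, r), (Complex.exp (Sm n κ z) - 1) / (It n κ z - z))
        = tPI * (M.card : ℂ)) ∧
      (∀ x : ℝ, Xb ≤ x →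
        (∮ z in C(z₀, r),
            Complex.log ((x:ℂ) - (Sm n κ z - S₀)) * (Complex.exp (Sm n κ z) - 1) / (It n κ z - z))
          = tPI * (M.map (fun a => Complex.log ((x:ℂ) - (Sm n κ a - S₀)))).sum) := by
  intro κ hκ
  have hgdiff : DifferentiableOn ℂ (fun w => It n κ w - w) (ball z₀ R) :=
    ((diff_It_z n κ).sub differentiable_id).differentiableOn
  have hsph' : ∀ z ∈ sphere z₀ r, It n κ z - z ≠ 0 := fun z hz => hgne κ hκ z (hsphW hz)
  obtain ⟨M, H, hMmem, hHd, hHne, hfac, hiff⟩ := FACT hr hrR hgdiff hsph'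
  have hslit : ∀ x : ℝ, Xb ≤ x → ∀ z ∈ closedBall z₀ R,
      ((x:ℂ) - (Sm n κ z - S₀)) ∈ Complex.slitPlane := by
    intro x hx z hz
    left
    have h1 := re_sub_lower x (Sm n κ z - S₀)
    have h2 := hXb κ hκ z hz
    linarith
  refine ⟨M, hMmem, hiff, ?_, ?_⟩
  · -- counting integral
    have hAP := AP hr hrR (differentiableOn_const (1:ℂ)) M hMmem
      (fun w => It n κ w - w) H hHd hHne hfac
    have hint_eq : (fun z => (1:ℂ) * deriv (fun w => It n κ w - w) z / (It n κ z - z))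
        = fun z => (Complex.exp (Sm n κ z) - 1) / (It n κ z - z) := by
      funext z; rw [gderiv' n κ]; ring
    rw [hint_eq] at hAP
    rw [hAP]
    have : (M.map (fun _ => (1:ℂ))).sum = (M.card : ℂ) := by
      rw [Multiset.map_const', Multiset.sum_replicate, nsmul_eq_mul, mul_one]
    rw [this, tPI]
  · -- weighted integrals
    intro x hx
    have hφd : DifferentiableOn ℂ
        (fun z => Complex.log ((x:ℂ) - (Sm n κ z - S₀))) (ball z₀ R) := by
      intro z hz
      have hinner : DifferentiableAt ℂ (fun w => (x:ℂ) - (Sm n κ w - S₀)) z :=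
        (differentiable_const _).differentiableAt.sub
          (((diff_Sm_z n κ) z).sub_const S₀)
      exact ((Complex.differentiableAt_log
        (hslit x hx z (ball_subset_closedBall hz))).comp z hinner).differentiableWithinAt
    have hAP := AP hr hrR hφd M hMmem (fun w => It n κ w - w) H hHd hHne hfac
    have hint_eq : (fun z => Complex.log ((x:ℂ) - (Sm n κ z - S₀))
          * deriv (fun w => It n κ w - w) z / (It n κ z - z))
        = fun z => Complex.log ((x:ℂ) - (Sm n κ z - S₀))
            * (Complex.exp (Sm n κ z) - 1) / (It n κ z - z) := by
      funext z; rw [gderiv' n κ]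
    rw [hint_eq] at hAP
    rw [hAP, tPI]

/-- Differentiability in the parameter of the counting integral. -/
lemma PARAM_p0 {V W : Set ℂ} (hV : IsOpen V) {z₀ : ℂ} {r : ℝ} (hr : 0 < r)
    (hsphW : sphere z₀ r ⊆ W)
    (hgne : ∀ κ ∈ V, ∀ z ∈ W, It n κ z - z ≠ 0) :
    ∀ κ₀ ∈ V, DifferentiableAt ℂ
      (fun κ => ∮ z in C(z₀, r), (Complex.exp (Sm n κ z) - 1) / (It n κ z - z)) κ₀ := by
  intro κ₀ hκ₀
  set f : ℂ → ℂ → ℂ := fun κ z => (Complex.exp (Sm n κ z) - 1) / (It n κ z - z) with hf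
  set f' : ℂ → ℂ → ℂ := fun κ z =>
    ((Complex.exp (Sm n κ z) * Dsm n κ z) * (It n κ z - z)
      - (Complex.exp (Sm n κ z) - 1) * Dk n κ z) / (It n κ z - z)^2 with hf'
  have hfc : ContinuousOn (fun p : ℂ × ℂ => f p.1 p.2) (V ×ˢ W) := by
    apply ContinuousOn.div
    · exact ((Complex.continuous_exp.comp (continuous_Sm n)).sub continuous_const).continuousOn
    · exact ((continuous_It n).sub continuous_snd).continuousOn
    · intro p hp; exact hgne p.1 hp.1 p.2 hp.2
  have hfc' : ContinuousOn (fun p : ℂ × ℂ => f' p.1 p.2) (V ×ˢ W) := by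
    apply ContinuousOn.div
    · apply ContinuousOn.sub
      · exact (((Complex.continuous_exp.comp (continuous_Sm n)).mul
          (continuous_Dsm n)).mul ((continuous_It n).sub continuous_snd)).continuousOn
      · exact (((Complex.continuous_exp.comp (continuous_Sm n)).sub
          continuous_const).mul (continuous_Dk n)).continuousOn
    · exact (((continuous_It n).sub continuous_snd).pow 2).continuousOn
    · intro p hp
      exact pow_ne_zero 2 (hgne p.1 hp.1 p.2 hp.2)
  have hd : ∀ κ ∈ V, ∀ z ∈ W, HasDerivAt (fun κ' => f κ' z) (f' κ z) κ := by
    intro κ hκ z hz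
    have h1 : HasDerivAt (fun κ' => Complex.exp (Sm n κ' z) - 1)
        (Complex.exp (Sm n κ z) * Dsm n κ z) κ :=
      ((hasDerivAt_Sm_k n κ z).cexp).sub_const 1
    have h2 : HasDerivAt (fun κ' => It n κ' z - z) (Dk n κ z) κ :=
      (hasDerivAt_It_k n κ z).sub_const z
    exact h1.div h2 (hgne κ hκ z hz)
  exact (PARAM hV hr hsphW f f' hfc hfc' hd κ₀ hκ₀).differentiableAt

/-- Differentiability in the parameter of the weighted integral. -/
lemma PARAM_q {V W : Set ℂ} (hV : IsOpen V) {z₀ S₀ : ℂ} {r R : ℝ} (hr : 0 < r)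
    (hsphW : sphere z₀ r ⊆ W) (hWR : W ⊆ closedBall z₀ R)
    (hgne : ∀ κ ∈ V, ∀ z ∈ W, It n κ z - z ≠ 0)
    (Xb : ℝ) (hXb : ∀ κ ∈ V, ∀ z ∈ closedBall z₀ R, ‖Sm n κ z - S₀‖ + 1 ≤ Xb)
    (x : ℝ) (hx : Xb ≤ x) :
    ∀ κ₀ ∈ V, DifferentiableAt ℂ
      (fun κ => ∮ z in C(z₀, r),
        Complex.log ((x:ℂ) - (Sm n κ z - S₀)) * (Complex.exp (Sm n κ z) - 1) / (It n κ z - z)) κ₀ := by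
  intro κ₀ hκ₀
  have hslit : ∀ κ ∈ V, ∀ z ∈ W, ((x:ℂ) - (Sm n κ z - S₀)) ∈ Complex.slitPlane := by
    intro κ hκ z hz
    left
    have h1 := re_sub_lower x (Sm n κ z - S₀)
    have h2 := hXb κ hκ z (hWR hz)
    linarith
  set L : ℂ → ℂ → ℂ := fun κ z => Complex.log ((x:ℂ) - (Sm n κ z - S₀)) with hL
  set L' : ℂ → ℂ → ℂ := fun κ z => (-(Dsm n κ z)) / ((x:ℂ) - (Sm n κ z - S₀)) with hL'
  set f : ℂ → ℂ → ℂ := fun κ z =>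
    L κ z * (Complex.exp (Sm n κ z) - 1) / (It n κ z - z) with hf
  set f' : ℂ → ℂ → ℂ := fun κ z =>
    ((L' κ z * (Complex.exp (Sm n κ z) - 1)
       + L κ z * (Complex.exp (Sm n κ z) * Dsm n κ z)) * (It n κ z - z)
      - L κ z * (Complex.exp (Sm n κ z) - 1) * Dk n κ z) / (It n κ z - z)^2 with hf'
  have hinner_cont : Continuous (fun p : ℂ × ℂ => (x:ℂ) - (Sm n p.1 p.2 - S₀)) :=
    continuous_const.sub ((continuous_Sm n).sub continuous_const)
  have hLcont : ContinuousOn (fun p : ℂ × ℂ => L p.1 p.2) (V ×ˢ W) := by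
    intro p hp
    exact (hinner_cont.continuousAt.clog (hslit p.1 hp.1 p.2 hp.2)).continuousWithinAt
  have hL'cont : ContinuousOn (fun p : ℂ × ℂ => L' p.1 p.2) (V ×ˢ W) := by
    apply ContinuousOn.div
    · exact (continuous_Dsm n).neg.continuousOn
    · exact hinner_cont.continuousOn
    · intro p hp
      exact Complex.slitPlane_ne_zero (hslit p.1 hp.1 p.2 hp.2)
  have hfc : ContinuousOn (fun p : ℂ × ℂ => f p.1 p.2) (V ×ˢ W) := by
    apply ContinuousOn.div
    · exact hLcont.mul
        ((Complex.continuous_exp.comp (continuous_Sm n)).sub continuous_const).continuousOn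
    · exact ((continuous_It n).sub continuous_snd).continuousOn
    · intro p hp; exact hgne p.1 hp.1 p.2 hp.2
  have hfc' : ContinuousOn (fun p : ℂ × ℂ => f' p.1 p.2) (V ×ˢ W) := by
    apply ContinuousOn.div
    · apply ContinuousOn.sub
      · apply ContinuousOn.mul
        · apply ContinuousOn.add
          · exact hL'cont.mul ((Complex.continuous_exp.comp (continuous_Sm n)).sub
              continuous_const).continuousOn
          · exact hLcont.mul ((Complex.continuous_exp.comp (continuous_Sm n)).mul
              (continuous_Dsm n)).continuousOn
        · exact ((continuous_It n).sub continuous_snd).continuousOn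
      · exact (hLcont.mul ((Complex.continuous_exp.comp (continuous_Sm n)).sub
          continuous_const).continuousOn).mul (continuous_Dk n).continuousOn
    · exact (((continuous_It n).sub continuous_snd).pow 2).continuousOn
    · intro p hp
      exact pow_ne_zero 2 (hgne p.1 hp.1 p.2 hp.2)
  have hd : ∀ κ ∈ V, ∀ z ∈ W, HasDerivAt (fun κ' => f κ' z) (f' κ z) κ := by
    intro κ hκ z hz
    have hin : HasDerivAt (fun κ' => (x:ℂ) - (Sm n κ' z - S₀)) (-(Dsm n κ z)) κ :=
      ((hasDerivAt_Sm_k n κ z).sub_const S₀).const_sub ((x:ℂ))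
    have hLd : HasDerivAt (fun κ' => L κ' z) (L' κ z) κ :=
      hin.clog (hslit κ hκ z hz)
    have h1 : HasDerivAt (fun κ' => L κ' z * (Complex.exp (Sm n κ' z) - 1))
        (L' κ z * (Complex.exp (Sm n κ z) - 1)
          + L κ z * (Complex.exp (Sm n κ z) * Dsm n κ z)) κ :=
      hLd.mul (((hasDerivAt_Sm_k n κ z).cexp).sub_const 1)
    have h2 : HasDerivAt (fun κ' => It n κ' z - z) (Dk n κ z) κ :=
      (hasDerivAt_It_k n κ z).sub_const z
    exact h1.div h2 (hgne κ hκ z hz)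
  exact (PARAM hV hr hsphW f f' hfc hfc' hd κ₀ hκ₀).differentiableAt

end Stage5

section Stage6

lemma norm_tPI : ‖tPI‖ = 2 * Real.pi := by
  rw [tPI]
  rw [norm_mul, norm_mul]
  simp [Complex.norm_real, abs_of_pos Real.pi_pos]

/-- A holomorphic function with values in `tPI • ℕ` on a preconnected open set is constant. -/
lemma CONST {V : Set ℂ} (hV : IsOpen V) (hVc : IsPreconnected V) (p0 : ℂ → ℂ)
    (hdiff : ∀ κ ∈ V, DifferentiableAt ℂ p0 κ)
    (hval : ∀ κ ∈ V, ∃ k : ℕ, p0 κ = tPI * k)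
    {κa κb : ℂ} (ha : κa ∈ V) (hb : κb ∈ V) : p0 κa = p0 κb := by
  classical
  have hlattice : ∀ (k k' : ℕ), k ≠ k' → 2 * Real.pi ≤ ‖tPI * (k:ℂ) - tPI * (k':ℂ)‖ := by
    intro k k' hkk
    have h1 : tPI * (k:ℂ) - tPI * (k':ℂ) = tPI * ((k:ℂ) - (k':ℂ)) := by ring
    rw [h1, norm_mul, norm_tPI]
    have h2 : ((k:ℂ) - (k':ℂ)) = (((k:ℝ) - (k':ℝ) : ℝ) : ℂ) := by push_cast; ring
    rw [h2, Complex.norm_real, Real.norm_eq_abs]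
    have h3 : (1:ℝ) ≤ |(k:ℝ) - (k':ℝ)| := by
      have h4 : ((k:ℤ) - (k':ℤ)) ≠ 0 := by
        intro h; apply hkk; omega
      have h5 := Int.one_le_abs h4
      have : ((1:ℤ):ℝ) ≤ ((|(k:ℤ) - (k':ℤ)|:ℤ) : ℝ) := by exact_mod_cast h5
      rw [Int.cast_abs] at this
      push_cast at this ⊢
      linarith
    nlinarith [Real.pi_pos]
  have hloc : ∀ κ' ∈ V, ∀ᶠ κ in 𝓝 κ', κ ∈ V ∧ p0 κ = p0 κ' := by
    intro κ' hκ'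
    have hc : ContinuousAt p0 κ' := (hdiff κ' hκ').continuousAt
    have hev1 : ∀ᶠ κ in 𝓝 κ', dist (p0 κ) (p0 κ') < Real.pi :=
      hc (Metric.ball_mem_nhds _ Real.pi_pos)
    filter_upwards [hev1, hV.mem_nhds hκ'] with κ h1 h2
    refine ⟨h2, ?_⟩
    obtain ⟨k, hk⟩ := hval κ h2
    obtain ⟨k', hk'⟩ := hval κ' hκ'
    rcases eq_or_ne k k' with rfl | hkk
    · rw [hk, hk']
    · exfalso
      have := hlattice k k' hkk
      rw [← hk, ← hk', ← dist_eq_norm] at this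
      nlinarith [Real.pi_pos]
  by_contra hab
  set A : Set ℂ := {κ | κ ∈ V ∧ p0 κ = p0 κa} with hA
  set B : Set ℂ := {κ | κ ∈ V ∧ p0 κ ≠ p0 κa} with hB
  have hAopen : IsOpen A := by
    rw [isOpen_iff_mem_nhds]
    intro κ hκ
    filter_upwards [hloc κ hκ.1] with κ'' h
    exact ⟨h.1, h.2.trans hκ.2⟩
  have hBopen : IsOpen B := by
    rw [isOpen_iff_mem_nhds]
    intro κ hκ
    filter_upwards [hloc κ hκ.1] with κ'' h
    exact ⟨h.1, h.2.symm ▸ hκ.2⟩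
  have hcover : V ⊆ A ∪ B := by
    intro κ hκ
    by_cases h : p0 κ = p0 κa
    · exact Or.inl ⟨hκ, h⟩
    · exact Or.inr ⟨hκ, h⟩
  obtain ⟨κc, hκc⟩ := hVc A B hAopen hBopen hcover ⟨κa, ha, ha, rfl⟩ ⟨κb, hb, hb, fun h => hab h.symm⟩
  exact hκc.2.2.2 hκc.2.1.2

/-- Lagrange interpolation evaluation at `0`. -/
lemma LAGRANGE (d : ℕ) (v : ℕ → ℂ) (hvinj : Set.InjOn v (Finset.range (d+1)))
    (w : Multiset ℂ) (hcard : Multiset.card w = d) :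
    (w.map (fun t => (0:ℂ) - t)).prod
      = ∑ i ∈ Finset.range (d+1),
          (w.map (fun t => v i - t)).prod
            * Polynomial.eval 0 (Lagrange.basis (Finset.range (d+1)) v i) := by
  classical
  set p : Polynomial ℂ := (w.map (fun t => Polynomial.X - Polynomial.C t)).prod with hpdef
  have hmon : ∀ f ∈ w.map (fun t => Polynomial.X - Polynomial.C t), f.Monic := by
    intro f hf
    obtain ⟨t, _, rfl⟩ := Multiset.mem_map.mp hf
    exact Polynomial.monic_X_sub_C t
  have hmon2 : ∀ t ∈ w, (Polynomial.X - Polynomial.C t).Monic := fun t _ =>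
    Polynomial.monic_X_sub_C t
  have hpmon : p.Monic := Polynomial.monic_multiset_prod_of_monic _ _ hmon2
  have hdeg : p.natDegree = d := by
    rw [hpdef, Polynomial.natDegree_multiset_prod_of_monic _ hmon]
    rw [Multiset.map_map]
    have : ((w.map (fun t => (Polynomial.X - Polynomial.C t).natDegree))).sum
        = ((w.map (fun _ => (1:ℕ)))).sum := by
      congr 1
      apply Multiset.map_congr rfl
      intro t _
      exact Polynomial.natDegree_X_sub_C t
    rw [show (Multiset.map (Polynomial.natDegree ∘ fun t => Polynomial.X - Polynomial.C t) w)
        = (w.map (fun t => (Polynomial.X - Polynomial.C t).natDegree)) from rfl, this]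
    rw [Multiset.map_const', Multiset.sum_replicate, smul_eq_mul, mul_one, hcard]
  have hdlt : p.degree < ((Finset.range (d+1)).card : WithBot ℕ) := by
    rw [Finset.card_range]
    calc p.degree ≤ (p.natDegree : WithBot ℕ) := Polynomial.degree_le_natDegree
      _ < ((d+1 : ℕ) : WithBot ℕ) := by
          rw [hdeg]
          exact_mod_cast Nat.lt_succ_self d
  have hinterp := Lagrange.eq_interpolate hvinj hdlt
  have heval : ∀ y : ℂ, p.eval y = (w.map (fun t => y - t)).prod := by
    intro y
    rw [hpdef, Polynomial.eval_multiset_prod, Multiset.map_map]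
    congr 1
    apply Multiset.map_congr rfl
    intro t _
    simp
  calc (w.map (fun t => (0:ℂ) - t)).prod = p.eval 0 := (heval 0).symm
    _ = Polynomial.eval 0 (Lagrange.interpolate (Finset.range (d+1)) v
          (fun i => p.eval (v i))) := by rw [← hinterp]
    _ = ∑ i ∈ Finset.range (d+1), (w.map (fun t => v i - t)).prod
          * Polynomial.eval 0 (Lagrange.basis (Finset.range (d+1)) v i) := by
        rw [Lagrange.interpolate_apply, Polynomial.eval_finset_sum]
        apply Finset.sum_congr rfl
        intro i _
        rw [Polynomial.eval_mul, Polynomial.eval_C, heval]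

/-- The accumulation lemma: if parameters of `P` accumulate at `κst`, then a whole
neighbourhood of `κst` is contained in `P`. -/
lemma STAR (n : ℕ) (hn : 1 ≤ n) (lam : ℂ) (hlam : ‖lam‖ = 1)
    (κst : ℂ) (κs : ℕ → ℂ)
    (hPm : ∀ m, ∃ z, It n (κs m) z = z ∧ Complex.exp (Sm n (κs m) z) = lam)
    (hne : ∀ m, κs m ≠ κst) (hlim : Filter.Tendsto κs Filter.atTop (𝓝 κst)) :
    ∀ᶠ κ in 𝓝 κst, ∃ z, It n κ z = z ∧ Complex.exp (Sm n κ z) = lam := by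
  classical
  have hlam0 : lam ≠ 0 := by
    intro h; rw [h] at hlam; simp at hlam
  choose zs hz1 hz2 using hPm
  have hre0 : ∀ m, (Sm n (κs m) (zs m)).re = 0 := by
    intro m
    have h := congrArg (‖·‖) (hz2 m)
    rw [Complex.norm_exp, hlam] at h
    rw [← Real.exp_zero] at h
    exact Real.exp_injective h
  set C : ℝ := ‖κst‖ + 1 with hC
  obtain ⟨N, hN⟩ := Metric.tendsto_atTop.mp hlim 1 one_pos
  set u0 : ℕ → ℂ := fun m => κs (m + N) with hu0
  set w0 : ℕ → ℂ := fun m => zs (m + N) with hw0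
  have hu0lim : Filter.Tendsto u0 Filter.atTop (𝓝 κst) :=
    hlim.comp (tendsto_add_atTop_nat N)
  have hu0C : ∀ m, ‖u0 m‖ ≤ C := by
    intro m
    have h1 : dist (κs (m+N)) κst < 1 := hN (m+N) (Nat.le_add_left N m)
    have h2 : ‖u0 m‖ = ‖κst + (u0 m - κst)‖ := by congr 1; ring
    calc ‖u0 m‖ = ‖κst + (u0 m - κst)‖ := h2
      _ ≤ ‖κst‖ + ‖u0 m - κst‖ := norm_add_le _ _
      _ ≤ ‖κst‖ + 1 := by
          have : ‖u0 m - κst‖ = dist (u0 m) κst := (dist_eq_norm _ _).symm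
          rw [this]; exact add_le_add le_rfl (le_of_lt h1)
  have hC0 : (0:ℝ) ≤ C := by positivity
  have hw0b : ∀ m, w0 m ∈ closedBall (0:ℂ) (Bd C (n-1)) := by
    intro m
    rw [mem_closedBall_zero_iff]
    exact lemB n hn (u0 m) (w0 m) C hC0 (hu0C m) (hz1 _) (hre0 _)
  obtain ⟨z₀, hz₀mem, φ, hφmono, hwlim⟩ :=
    tendsto_subseq_of_bounded isBounded_closedBall hw0b
  set u : ℕ → ℂ := fun m => u0 (φ m) with hu
  set w : ℕ → ℂ := fun m => w0 (φ m) with hw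
  have hulim : Filter.Tendsto u Filter.atTop (𝓝 κst) := hu0lim.comp hφmono.tendsto_atTop
  have hwlim' : Filter.Tendsto w Filter.atTop (𝓝 z₀) := hwlim
  have hufix : ∀ m, It n (u m) (w m) = w m := fun m => hz1 _
  have huexp : ∀ m, Complex.exp (Sm n (u m) (w m)) = lam := fun m => hz2 _
  have hune : ∀ m, u m ≠ κst := fun m => hne _
  have hprod : Filter.Tendsto (fun m => (u m, w m)) Filter.atTop (𝓝 (κst, z₀)) :=
    hulim.prodMk_nhds hwlim'
  -- limit is a fixed point with the same multiplier
  have hfix0 : It n κst z₀ = z₀ := by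
    have h1 : Filter.Tendsto (fun m => It n (u m) (w m)) Filter.atTop (𝓝 (It n κst z₀)) :=
      ((continuous_It n).tendsto _).comp hprod
    have h2 : (fun m => It n (u m) (w m)) = w := funext hufix
    rw [h2] at h1
    exact tendsto_nhds_unique h1 hwlim'
  set S₀ : ℂ := Sm n κst z₀ with hS₀
  have hSlim : Filter.Tendsto (fun m => Sm n (u m) (w m)) Filter.atTop (𝓝 S₀) :=
    ((continuous_Sm n).tendsto _).comp hprod
  have hexpS0 : Complex.exp S₀ = lam := by
    have h1 : Filter.Tendsto (fun m => Complex.exp (Sm n (u m) (w m)))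
        Filter.atTop (𝓝 (Complex.exp S₀)) := (Complex.continuous_exp.tendsto _).comp hSlim
    have h2 : (fun m => Complex.exp (Sm n (u m) (w m))) = fun _ => lam := funext huexp
    rw [h2] at h1
    exact tendsto_nhds_unique h1 tendsto_const_nhds
  -- eventually the orbit sums are exactly S₀
  have hSeq : ∀ᶠ m in Filter.atTop, Sm n (u m) (w m) = S₀ := by
    have hdiff0 : Filter.Tendsto (fun m => ‖Sm n (u m) (w m) - S₀‖) Filter.atTop (𝓝 0) := by
      have := (hSlim.sub_const S₀).norm
      simpa using this
    have hsmall : ∀ᶠ m in Filter.atTop, ‖Sm n (u m) (w m) - S₀‖ < 2*Real.pi := by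
      have h2pi : (0:ℝ) < 2*Real.pi := by positivity
      exact hdiff0.eventually_lt_const h2pi
    filter_upwards [hsmall] with m hm
    have h1 : Complex.exp (Sm n (u m) (w m) - S₀) = 1 := by
      rw [Complex.exp_sub, huexp m, hexpS0, div_self hlam0]
    obtain ⟨k, hk⟩ := Complex.exp_eq_one_iff.mp h1
    rw [hk] at hm
    have hnormk : ‖(k:ℂ) * (2 * (Real.pi:ℂ) * Complex.I)‖ = |(k:ℝ)| * (2*Real.pi) := by
      rw [norm_mul]
      have e1 : ‖(k:ℂ)‖ = |(k:ℝ)| := by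
        rw [show ((k:ℂ)) = (((k:ℝ):ℝ):ℂ) from by push_cast; ring, Complex.norm_real,
          Real.norm_eq_abs]
      have e2 : ‖(2 * (Real.pi:ℂ) * Complex.I)‖ = 2*Real.pi := by
        rw [norm_mul, norm_mul]
        simp [Complex.norm_real, abs_of_pos Real.pi_pos]
      rw [e1, e2]
    rw [hnormk] at hm
    have hk0 : k = 0 := by
      have h2pi : (0:ℝ) < 2*Real.pi := by positivity
      have h6 : |(k:ℝ)| < 1 := by nlinarith [abs_nonneg ((k:ℝ))]
      have h7 : ((|k| : ℤ) : ℝ) < 1 := by rw [Int.cast_abs]; exact h6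
      have h8 : |k| < 1 := by exact_mod_cast h7
      rwa [Int.abs_lt_one_iff] at h8
    rw [hk0] at hk
    simp at hk
    linear_combination hk
  -- the limit fixed point is an isolated zero
  have hgd : ∀ κ : ℂ, Differentiable ℂ (fun z => It n κ z - z) := fun κ =>
    (diff_It_z n κ).sub differentiable_id
  have hnotev : ¬ (∀ᶠ z in 𝓝 z₀, It n κst z - z = 0) := by
    intro h
    have hEq : EqOn (fun z => It n κst z - z) 0 univ :=
      AnalyticOnNhd.eqOn_zero_of_preconnected_of_eventuallyEq_zero
        ((hgd κst).differentiableOn.analyticOnNhd isOpen_univ)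
        isPreconnected_univ (mem_univ z₀) h
    obtain ⟨z, hzz⟩ := exists_not_fixed n hn κst
    have := hEq (mem_univ z)
    simp only [Pi.zero_apply] at this
    exact hzz (by linear_combination this)
  have hev_ne : ∀ᶠ z in 𝓝[≠] z₀, It n κst z - z ≠ 0 := by
    have := (((hgd κst).differentiableOn.analyticOnNhd isOpen_univ) z₀
      (mem_univ z₀)).eventually_eq_zero_or_eventually_ne_zero
    exact this.resolve_left hnotev
  rw [eventually_nhdsWithin_iff] at hev_ne
  rw [Metric.eventually_nhds_iff] at hev_ne
  obtain ⟨ε₁, hε₁, hball⟩ := hev_ne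
  set r : ℝ := ε₁/2 with hrdef
  set R : ℝ := ε₁ with hRdef
  have hr : 0 < r := by positivity
  have hrR : r < R := by rw [hrdef, hRdef]; linarith
  have hsph0 : ∀ z ∈ sphere z₀ r, It n κst z - z ≠ 0 := by
    intro z hz
    have h1 : dist z z₀ = r := mem_sphere.mp hz
    have h2 : z ≠ z₀ := by
      intro h; rw [h] at h1; simp at h1; rw [hrdef] at h1; linarith
    exact hball (by rw [h1, hrdef]; linarith) h2
  -- tube lemma around the sphere
  have hOopen : IsOpen {p : ℂ × ℂ | It n p.1 p.2 - p.2 ≠ 0} := by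
    have hcont : Continuous (fun p : ℂ × ℂ => It n p.1 p.2 - p.2) :=
      (continuous_It n).sub continuous_snd
    exact isOpen_compl_singleton.preimage hcont
  have hsub : ({κst} : Set ℂ) ×ˢ sphere z₀ r ⊆ {p : ℂ × ℂ | It n p.1 p.2 - p.2 ≠ 0} := by
    rintro ⟨κ, z⟩ ⟨hκ, hz⟩
    rw [mem_singleton_iff] at hκ
    subst hκ
    exact hsph0 z hz
  obtain ⟨uo, vo, huo, hvo, hκuo, hsvo, huv⟩ := generalized_tube_lemma isCompact_singleton
    (isCompact_sphere z₀ r) hOopen hsub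
  obtain ⟨δ₀, hδ₀, hδball⟩ := Metric.isOpen_iff.mp huo κst (hκuo rfl)
  set V : Set ℂ := ball κst (δ₀/2) with hVdef
  have hVopen : IsOpen V := isOpen_ball
  have hκstV : κst ∈ V := mem_ball_self (by positivity)
  have hVuo : V ⊆ uo := by
    intro κ hκ
    apply hδball
    rw [mem_ball] at hκ ⊢
    linarith
  set W : Set ℂ := vo ∩ ball z₀ R with hWdef
  have hsphW : sphere z₀ r ⊆ W := by
    intro z hz
    refine ⟨hsvo hz, ?_⟩
    rw [mem_ball, mem_sphere.mp hz]
    exact hrR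
  have hWR : W ⊆ closedBall z₀ R := fun z hz => ball_subset_closedBall hz.2
  have hgne : ∀ κ ∈ V, ∀ z ∈ W, It n κ z - z ≠ 0 := by
    intro κ hκ z hz
    exact huv (Set.mk_mem_prod (hVuo hκ) hz.1)
  -- bound for the nodes
  have hKcp : IsCompact ((closedBall κst (δ₀/2)) ×ˢ (closedBall z₀ R)) :=
    (isCompact_closedBall _ _).prod (isCompact_closedBall _ _)
  obtain ⟨MT, hMT⟩ := hKcp.exists_bound_of_continuousOn
    (((continuous_Sm n).sub continuous_const).continuousOn :
      ContinuousOn (fun p : ℂ × ℂ => Sm n p.1 p.2 - S₀) _)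
  set Xb : ℝ := MT + 1 with hXbdef
  have hXb : ∀ κ ∈ V, ∀ z ∈ closedBall z₀ R, ‖Sm n κ z - S₀‖ + 1 ≤ Xb := by
    intro κ hκ z hz
    have : ‖Sm n κ z - S₀‖ ≤ MT := hMT (κ, z) ⟨ball_subset_closedBall hκ, hz⟩
    rw [hXbdef]
    linarith
  -- local data
  have hdata := LOCALDATA n z₀ S₀ r R hr hrR V W hsphW hgne Xb hXb
  set p0 : ℂ → ℂ := fun κ => ∮ z in C(z₀, r), (Complex.exp (Sm n κ z) - 1) / (It n κ z - z)
    with hp0def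
  set qf : ℝ → ℂ → ℂ := fun x κ => ∮ z in C(z₀, r),
    Complex.log ((x:ℂ) - (Sm n κ z - S₀)) * (Complex.exp (Sm n κ z) - 1) / (It n κ z - z)
    with hqfdef
  have hp0diff : ∀ κ ∈ V, DifferentiableAt ℂ p0 κ := PARAM_p0 hVopen hr hsphW hgne
  have hqdiff : ∀ x : ℝ, Xb ≤ x → ∀ κ ∈ V, DifferentiableAt ℂ (qf x) κ := fun x hx =>
    PARAM_q hVopen hr hsphW hWR hgne Xb hXb x hx
  -- the number of zeros is constant on V
  obtain ⟨Mst, hMstmem, hMstiff, hMstp0, hMstq⟩ := hdata κst hκstV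
  set d : ℕ := Multiset.card Mst with hddef
  have hp0const : ∀ κ ∈ V, p0 κ = tPI * (d:ℂ) := by
    intro κ hκ
    have h1 : p0 κ = p0 κst :=
      CONST hVopen (convex_ball _ _).isPreconnected p0 hp0diff
        (fun κ' hκ' => by
          obtain ⟨M, _, _, hp0', _⟩ := hdata κ' hκ'
          exact ⟨Multiset.card M, hp0'⟩) hκ hκstV
    rw [h1]; exact hMstp0
  have hcardd : ∀ κ ∈ V, ∀ M : Multiset ℂ,
      p0 κ = tPI * (Multiset.card M : ℂ) → Multiset.card M = d := by
    intro κ hκ M hM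
    have h1 : tPI * (Multiset.card M : ℂ) = tPI * (d:ℂ) := by
      rw [← hM]; exact hp0const κ hκ
    have h2 : ((Multiset.card M : ℂ)) = (d:ℂ) := mul_left_cancel₀ tPI_ne h1
    exact_mod_cast h2
  -- nodes and the holomorphic detector function Φ
  set vnode : ℕ → ℂ := fun i => ((Xb + i : ℝ) : ℂ) with hvnode
  have hvinj : Set.InjOn vnode (Finset.range (d+1)) := by
    intro i _ j _ hij
    rw [hvnode] at hij
    simp only [Complex.ofReal_inj] at hij
    have : (i:ℝ) = j := by push_cast at hij; linarith
    exact_mod_cast this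
  set ci : ℕ → ℂ := fun i => Polynomial.eval 0 (Lagrange.basis (Finset.range (d+1)) vnode i)
    with hcidef
  set Φ : ℂ → ℂ := fun κ => ∑ i ∈ Finset.range (d+1),
    Complex.exp ((qf (Xb + i) κ) / tPI) * ci i with hΦdef
  have hΦdiff : ∀ κ ∈ V, DifferentiableAt ℂ Φ κ := by
    intro κ hκ
    apply DifferentiableAt.fun_sum
    intro i _
    have hx : Xb ≤ Xb + i := by
      have : (0:ℝ) ≤ i := Nat.cast_nonneg i
      linarith
    exact (((hqdiff _ hx κ hκ).div_const tPI).cexp).mul_const (ci i)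
  -- pointwise value of Φ
  have hΦval : ∀ κ ∈ V, ∀ M : Multiset ℂ, (∀ a ∈ M, a ∈ ball z₀ r) →
      Multiset.card M = d →
      (∀ x : ℝ, Xb ≤ x → qf x κ
        = tPI * (M.map (fun a => Complex.log ((x:ℂ) - (Sm n κ a - S₀)))).sum) →
      Φ κ = ((M.map (fun a => Sm n κ a - S₀)).map (fun t => (0:ℂ) - t)).prod := by
    intro κ hκ M hMmem hMcard hq
    have hnz : ∀ x : ℝ, Xb ≤ x → ∀ a ∈ M, ((x:ℂ) - (Sm n κ a - S₀)) ≠ 0 := by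
      intro x hx a ha
      apply Complex.slitPlane_ne_zero
      left
      have h1 := re_sub_lower x (Sm n κ a - S₀)
      have h2 := hXb κ hκ a (ball_subset_closedBall
        ((ball_subset_ball hrR.le) (hMmem a ha)))
      linarith
    have hexpq : ∀ x : ℝ, Xb ≤ x → Complex.exp (qf x κ / tPI)
        = (M.map (fun a => (x:ℂ) - (Sm n κ a - S₀))).prod := by
      intro x hx
      rw [hq x hx, mul_div_cancel_left₀ _ tPI_ne, expMultisetSum]
      congr 1
      apply Multiset.map_congr rfl
      intro a ha
      exact Complex.exp_log (hnz x hx a ha)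
    have hw : ((M.map (fun a => Sm n κ a - S₀)).map (fun t => (0:ℂ) - t)).prod
        = ∑ i ∈ Finset.range (d+1),
            ((M.map (fun a => Sm n κ a - S₀)).map (fun t => vnode i - t)).prod * ci i := by
      apply LAGRANGE d vnode hvinj
      rw [Multiset.card_map, hMcard]
    rw [hw, hΦdef]
    apply Finset.sum_congr rfl
    intro i _
    have hx : Xb ≤ Xb + i := by
      have : (0:ℝ) ≤ i := Nat.cast_nonneg i
      linarith
    congr 1
    rw [hexpq _ hx, Multiset.map_map]
    congr 1
  -- Φ vanishes along the sequence
  have hΦ0 : ∀ᶠ m in Filter.atTop, Φ (u m) = 0 := by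
    have hevV : ∀ᶠ m in Filter.atTop, u m ∈ V := hulim.eventually (hVopen.mem_nhds hκstV)
    have hevW : ∀ᶠ m in Filter.atTop, w m ∈ ball z₀ r :=
      hwlim'.eventually (isOpen_ball.mem_nhds (mem_ball_self hr))
    filter_upwards [hevV, hevW, hSeq] with m hmV hmW hmS
    obtain ⟨M, hMmem, hMiff, hMp0, hMq⟩ := hdata (u m) hmV
    have hMcard : Multiset.card M = d := hcardd (u m) hmV M hMp0
    rw [hΦval (u m) hmV M hMmem hMcard hMq]
    apply Multiset.prod_eq_zero
    rw [Multiset.map_map]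
    rw [Multiset.mem_map]
    refine ⟨w m, ?_, ?_⟩
    · rw [← hMiff (w m) (ball_subset_closedBall hmW)]
      rw [hufix m]; ring
    · simp only [Function.comp_apply]
      rw [hmS]; ring
  -- identity theorem
  have hΦanal : AnalyticAt ℂ Φ κst := by
    have : AnalyticOnNhd ℂ Φ V :=
      DifferentiableOn.analyticOnNhd
        (fun κ hκ => (hΦdiff κ hκ).differentiableWithinAt) hVopen
    exact this κst hκstV
  have hΦfreq : ∃ᶠ κ in 𝓝[≠] κst, Φ κ = 0 := by
    have htend : Filter.Tendsto u Filter.atTop (𝓝[≠] κst) := by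
      apply tendsto_nhdsWithin_of_tendsto_nhds_of_eventually_within u hulim
      filter_upwards with m
      exact hune m
    exact htend.frequently hΦ0.frequently
  have hΦev : ∀ᶠ κ in 𝓝 κst, Φ κ = 0 :=
    hΦanal.frequently_zero_iff_eventually_zero.mp hΦfreq
  -- conclusion
  have hfinal : ∀ᶠ κ in 𝓝 κst, κ ∈ V ∧ Φ κ = 0 := by
    filter_upwards [hΦev, hVopen.mem_nhds hκstV] with κ h1 h2
    exact ⟨h2, h1⟩
  filter_upwards [hfinal] with κ hκ
  obtain ⟨hκV, hκΦ⟩ := hκ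
  obtain ⟨M, hMmem, hMiff, hMp0, hMq⟩ := hdata κ hκV
  have hMcard : Multiset.card M = d := hcardd κ hκV M hMp0
  rw [hΦval κ hκV M hMmem hMcard hMq] at hκΦ
  rw [Multiset.prod_eq_zero_iff] at hκΦ
  rw [Multiset.mem_map] at hκΦ
  obtain ⟨t, ht, ht0⟩ := hκΦ
  rw [Multiset.mem_map] at ht
  obtain ⟨a, haM, hat⟩ := ht
  refine ⟨a, ?_, ?_⟩
  · have := (hMiff a (ball_subset_closedBall (hMmem a haM))).mpr haM
    linear_combination this
  · have hta : Sm n κ a = S₀ := by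
      rw [← hat] at ht0
      linear_combination -ht0
    rw [hta, hexpS0]

end Stage6

section Final

/-- Fix `n ≥ 1` and `λ ∈ ℂ` with `|λ| = 1`. The set
`P = {κ : ∃ z, E_κ^n(z) = z ∧ (E_κ^n)'(z) = λ}` is discrete in `ℂ`: every `κ₀ ∈ P` has
a neighbourhood `U` with `U ∩ P = {κ₀}`. -/
theorem stmt16 (n : ℕ) (hn : 1 ≤ n) (lam : ℂ) (hlam : ‖lam‖ = 1)
    (P : Set ℂ)
    (hP : P = {κ : ℂ | ∃ z : ℂ, (fun w => Complex.exp w + κ)^[n] z = z ∧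
      deriv ((fun w => Complex.exp w + κ)^[n]) z = lam})
    (κ₀ : ℂ) (hκ₀ : κ₀ ∈ P) :
    ∃ U ∈ nhds κ₀, U ∩ P = {κ₀} := by
  classical
  have hPiff : ∀ κ : ℂ, κ ∈ P ↔ ∃ z, It n κ z = z ∧ Complex.exp (Sm n κ z) = lam := by
    intro κ
    rw [hP]
    simp only [Set.mem_setOf_eq]
    constructor
    · rintro ⟨z, h1, h2⟩
      refine ⟨z, h1, ?_⟩
      rw [← deriv_It_z n κ z]
      exact h2
    · rintro ⟨z, h1, h2⟩
      refine ⟨z, h1, ?_⟩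
      rw [← deriv_It_z n κ z] at h2
      exact h2
  have hstar' : ∀ κst : ℂ, ∀ κs : ℕ → ℂ, (∀ m, κs m ∈ P) → (∀ m, κs m ≠ κst) →
      Filter.Tendsto κs Filter.atTop (𝓝 κst) → P ∈ 𝓝 κst := by
    intro κst κs hPmem hne' hlim
    have h := STAR n hn lam hlam κst κs (fun m => (hPiff _).mp (hPmem m)) hne' hlim
    have h2 : ∀ᶠ κ in 𝓝 κst, κ ∈ P := h.mono (fun κ hκ => (hPiff κ).mpr hκ)
    exact h2
  by_contra hcon
  push_neg at hcon
  have hseq : ∀ m : ℕ, ∃ x, x ∈ P ∧ x ≠ κ₀ ∧ dist x κ₀ < 1/(m+1) := by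
    intro m
    have hpos : (0:ℝ) < 1/(m+1) := by positivity
    have hU := hcon (ball κ₀ (1/(m+1))) (ball_mem_nhds _ hpos)
    by_contra hno
    push_neg at hno
    apply hU
    apply Set.eq_singleton_iff_unique_mem.mpr
    refine ⟨⟨mem_ball_self hpos, hκ₀⟩, ?_⟩
    intro x hx
    by_contra hxne
    exact absurd (mem_ball.mp hx.1) (not_lt.mpr (hno x hx.2 hxne))
  choose κs hκsP hκsne hκsd using hseq
  have hκslim : Filter.Tendsto κs Filter.atTop (𝓝 κ₀) := by
    rw [tendsto_iff_dist_tendsto_zero]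
    apply squeeze_zero (fun m => dist_nonneg) (fun m => (hκsd m).le)
    exact tendsto_one_div_add_atTop_nhds_zero_nat
  have hQ0 : P ∈ 𝓝 κ₀ := hstar' κ₀ κs hκsP hκsne hκslim
  set Q := interior P with hQdef
  have hQopen : IsOpen Q := isOpen_interior
  have hκ₀Q : κ₀ ∈ Q := mem_interior_iff_mem_nhds.mpr hQ0
  have hQclosed : IsClosed Q := by
    apply isClosed_of_closure_subset
    intro κst hκstcl
    by_cases hin : κst ∈ Q
    · exact hin
    · obtain ⟨κs', hκs'Q, hκs'lim⟩ := mem_closure_iff_seq_limit.mp hκstcl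
      have hP' : ∀ m, κs' m ∈ P := fun m => interior_subset (hκs'Q m)
      have hne' : ∀ m, κs' m ≠ κst := fun m h => hin (h ▸ hκs'Q m)
      exact mem_interior_iff_mem_nhds.mpr (hstar' κst κs' hP' hne' hκs'lim)
  have hclop : IsClopen Q := ⟨hQclosed, hQopen⟩
  have hQuniv : Q = univ := hclop.eq_univ ⟨κ₀, hκ₀Q⟩
  have hm2 : (-2 : ℂ) ∈ P := by
    apply interior_subset (s := P)
    rw [← hQdef, hQuniv]
    exact mem_univ _
  obtain ⟨z, hz1, hz2⟩ := (hPiff (-2)).mp hm2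
  have hre : (Sm n (-2) z).re = 0 := by
    have h := congrArg (‖·‖) hz2
    rw [Complex.norm_exp, hlam, ← Real.exp_zero] at h
    exact Real.exp_injective h
  exact lemA n hn z hz1 hre

end Final

end
end
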